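/- Let E be an essentially small exact category (in the sense of Quillen), linear over a finite field k, with finite morphism spaces and finite first extension spaces: |Hom(A,B)| < ∞ and |Ext^1(A,B)| < ∞ for all objects A, B of E. Then the Hall algebra H(E) — the Q-vector space with basis the set of isomorphism classes [A] of objects of E and multiplication [A] ⋄ [C] = Σ_{B ∈ Iso(E)} (|Ext^1_E(A,C)_B| / |Hom_E(A,C)|) [B] — is an associative unital algebra, with unit the class [0] of the zero object. -/

import Mathlib

/-!
Common definitions for formalizing "semi-derived Hall algebras" (Gorsky, arXiv:1409.6798):
Quillen exact structures, Frobenius categories, conflations and (Yoneda-style) `Ext`-sets,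
Hall algebra structure constants, stable categories, suspension/syzygy data,
Grothendieck groups, and localizations of Hall algebras.
-/

open CategoryTheory CategoryTheory.Limits ZeroObject

universe w v u v' u'

namespace HallPaper

section IsoClasses

variable {𝒞 : Type u} [Category.{v} 𝒞] {𝒟 : Type u'} [Category.{v'} 𝒟]

/-- The set of isomorphism classes of objects of a category. -/
def IsoCl (𝒞 : Type u) [Category.{v} 𝒞] : Type u :=
  Quotient (isIsomorphicSetoid 𝒞)

/-- The isomorphism class of an object. -/
def skel (A : 𝒞) : IsoCl 𝒞 := Quotient.mk (isIsomorphicSetoid 𝒞) A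

/-- The basis vector of the Hall module (the `ℚ`-vector space with basis the isomorphism
classes of objects) corresponding to an object. -/
noncomputable def hallBasis (A : 𝒞) : IsoCl 𝒞 →₀ ℚ := Finsupp.single (skel A) 1

/-- The map on isomorphism classes induced by a functor. -/
def skelMap (F : 𝒞 ⥤ 𝒟) : IsoCl 𝒞 → IsoCl 𝒟 :=
  @Quotient.map _ _ (isIsomorphicSetoid 𝒞) (isIsomorphicSetoid 𝒟) F.obj
    (fun _ _ h => h.elim fun e => ⟨F.mapIso e⟩)

/-- The `ℚ`-linear map between Hall modules induced by a functor,
`[M] ↦ [F(M)]` on basis vectors. -/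
noncomputable def hallMap (F : 𝒞 ⥤ 𝒟) : (IsoCl 𝒞 →₀ ℚ) →ₗ[ℚ] (IsoCl 𝒟 →₀ ℚ) :=
  Finsupp.lmapDomain ℚ ℚ (skelMap F)

end IsoClasses

/-- A Quillen exact structure on an additive category, given by the class of conflations
(admissible short exact sequences) `X ↣ Y ↠ Z`, encoded as the predicate `conf i p`. -/
structure ExactStructure (𝒞 : Type u) [Category.{v} 𝒞] [Preadditive 𝒞] [HasZeroObject 𝒞]
    [HasBinaryBiproducts 𝒞] where
  /-- `conf i p` says that `X ↣ Y ↠ Z` is a conflation. -/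
  conf : ∀ {X Y Z : 𝒞}, (X ⟶ Y) → (Y ⟶ Z) → Prop
  comp_zero : ∀ {X Y Z : 𝒞} {i : X ⟶ Y} {p : Y ⟶ Z}, conf i p → i ≫ p = 0
  is_kernel : ∀ {X Y Z : 𝒞} {i : X ⟶ Y} {p : Y ⟶ Z} (h : conf i p),
    Nonempty (IsLimit (KernelFork.ofι i (comp_zero h)))
  is_cokernel : ∀ {X Y Z : 𝒞} {i : X ⟶ Y} {p : Y ⟶ Z} (h : conf i p),
    Nonempty (IsColimit (CokernelCofork.ofπ p (comp_zero h)))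
  conf_iso : ∀ {X Y Z X' Y' Z' : 𝒞} {i : X ⟶ Y} {p : Y ⟶ Z}
    (eX : X ≅ X') (eY : Y ≅ Y') (eZ : Z ≅ Z') {i' : X' ⟶ Y'} {p' : Y' ⟶ Z'},
    conf i p → i ≫ eY.hom = eX.hom ≫ i' → p ≫ eZ.hom = eY.hom ≫ p' → conf i' p'
  split_conf : ∀ X Y : 𝒞, conf (biprod.inl : X ⟶ X ⊞ Y) (biprod.snd : X ⊞ Y ⟶ Y)
  infl_comp : ∀ {X Y Z : 𝒞} (i : X ⟶ Y) (j : Y ⟶ Z),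
    (∃ (W : 𝒞) (p : Y ⟶ W), conf i p) → (∃ (W : 𝒞) (p : Z ⟶ W), conf j p) →
    ∃ (W : 𝒞) (p : Z ⟶ W), conf (i ≫ j) p
  defl_comp : ∀ {X Y Z : 𝒞} (p : X ⟶ Y) (q : Y ⟶ Z),
    (∃ (W : 𝒞) (i : W ⟶ X), conf i p) → (∃ (W : 𝒞) (i : W ⟶ Y), conf i q) →
    ∃ (W : 𝒞) (i : W ⟶ X), conf i (p ≫ q)
  pushout_infl : ∀ {X Y Z X' : 𝒞} {i : X ⟶ Y} {p : Y ⟶ Z}, conf i p → ∀ f : X ⟶ X',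
    ∃ (Y' : 𝒞) (i' : X' ⟶ Y') (g : Y ⟶ Y'), IsPushout i f g i' ∧
      ∃ (W : 𝒞) (p' : Y' ⟶ W), conf i' p'
  pullback_defl : ∀ {X Y Z Z' : 𝒞} {i : X ⟶ Y} {p : Y ⟶ Z}, conf i p → ∀ f : Z' ⟶ Z,
    ∃ (Y' : 𝒞) (p' : Y' ⟶ Z') (g : Y' ⟶ Y), IsPullback g p' p f ∧
      ∃ (W : 𝒞) (i' : W ⟶ Y'), conf i' p'

section Exact

variable {𝒞 : Type u} [Category.{v} 𝒞] [Preadditive 𝒞] [HasZeroObject 𝒞] [HasBinaryBiproducts 𝒞]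

/-- An object `P` is projective (relative to an exact structure) if any morphism from `P`
lifts along every deflation. Equivalently, `Ext¹(P, -) = 0`. -/
def ExactStructure.Proj (E : ExactStructure 𝒞) (P : 𝒞) : Prop :=
  ∀ ⦃X Y Z : 𝒞⦄ (i : X ⟶ Y) (p : Y ⟶ Z), E.conf i p → ∀ f : P ⟶ Z, ∃ g : P ⟶ Y, g ≫ p = f

/-- An object `I` is injective (relative to an exact structure) if any morphism to `I`
extends along every inflation. Equivalently, `Ext¹(-, I) = 0`. -/
def ExactStructure.Inj (E : ExactStructure 𝒞) (I : 𝒞) : Prop :=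
  ∀ ⦃X Y Z : 𝒞⦄ (i : X ⟶ Y) (p : Y ⟶ Z), E.conf i p → ∀ f : X ⟶ I, ∃ g : Y ⟶ I, i ≫ g = f

/-- A Frobenius category: an exact category with enough projectives and enough injectives,
in which the projective objects coincide with the injective objects. -/
structure IsFrobenius (E : ExactStructure 𝒞) : Prop where
  enough_proj : ∀ X : 𝒞, ∃ (P W : 𝒞) (i : W ⟶ P) (p : P ⟶ X), E.Proj P ∧ E.conf i p
  enough_inj : ∀ X : 𝒞, ∃ (I W : 𝒞) (i : X ⟶ I) (p : I ⟶ W), E.Inj I ∧ E.conf i p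
  proj_iff_inj : ∀ P : 𝒞, E.Proj P ↔ E.Inj P

/-- A conflation `C ↣ mid ↠ A`, i.e. an extension of `A` by `C`. -/
structure Conf (E : ExactStructure 𝒞) (A C : 𝒞) where
  mid : 𝒞
  incl : C ⟶ mid
  quot : mid ⟶ A
  isConf : E.conf incl quot

/-- Equivalence of extensions: an isomorphism of the middle terms commuting with the
structure maps (and inducing the identity on the end terms). -/
def ConfRel (E : ExactStructure 𝒞) {A C : 𝒞} (e e' : Conf E A C) : Prop :=
  ∃ φ : e.mid ≅ e'.mid, e.incl ≫ φ.hom = e'.incl ∧ φ.hom ≫ e'.quot = e.quot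

/-- `Ext¹(A, C)`: the set of equivalence classes of extensions of `A` by `C`. -/
def Ext1 (E : ExactStructure 𝒞) (A C : 𝒞) : Type (max u v) :=
  Quot (ConfRel E (A := A) (C := C))

/-- The class of a conflation in `Ext¹`. -/
def Ext1.mk (E : ExactStructure 𝒞) {A C : 𝒞} (e : Conf E A C) : Ext1 E A C :=
  Quot.mk _ e

/-- The class in `Ext¹(A,C)` of the split extension `C ↣ C ⊕ A ↠ A`. -/
noncomputable def splitExt (E : ExactStructure 𝒞) (A C : 𝒞) : Ext1 E A C :=
  Ext1.mk E ⟨C ⊞ A, biprod.inl, biprod.snd, E.split_conf C A⟩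

/-- `|Ext¹(A, C)_B|`: the number of classes of extensions of `A` by `C` whose middle term is
isomorphic to `B`. -/
noncomputable def ext1CardWith (E : ExactStructure 𝒞) (A C B : 𝒞) : ℕ :=
  Nat.card {x : Ext1 E A C // ∃ e : Conf E A C, Ext1.mk E e = x ∧ Nonempty (e.mid ≅ B)}

/-- The structure constant `|Ext¹(A, C)_B| / |Hom(A, C)|` of the Hall algebra. -/
noncomputable def hallCoeff (E : ExactStructure 𝒞) (A C B : 𝒞) : ℚ :=
  (ext1CardWith E A C B : ℚ) / (Nat.card (A ⟶ C) : ℚ)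

/-- A bilinear multiplication on the Hall module with the Hall structure constants:
`[A] ⋄ [C] = ∑_B (|Ext¹(A,C)_B| / |Hom(A,C)|) [B]`. -/
structure HallMul (E : ExactStructure 𝒞) where
  mul : (IsoCl 𝒞 →₀ ℚ) →ₗ[ℚ] (IsoCl 𝒞 →₀ ℚ) →ₗ[ℚ] (IsoCl 𝒞 →₀ ℚ)
  mul_basis : ∀ A C B : 𝒞, mul (hallBasis A) (hallBasis C) (skel B) = hallCoeff E A C B

/-- A morphism factors through a projective-injective object. -/
def FactorsThruProj (E : ExactStructure 𝒞) {X Y : 𝒞} (f : X ⟶ Y) : Prop :=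
  ∃ (P : 𝒞) (u : X ⟶ P) (v : P ⟶ Y), E.Proj P ∧ u ≫ v = f

/-- Morphism space in the stable category: morphisms of `𝒞` modulo those factoring
through projective-injective objects. -/
def StHom (E : ExactStructure 𝒞) (X Y : 𝒞) : Type v :=
  Quot (fun f g : X ⟶ Y => FactorsThruProj E (f - g))

/-- The class in the stable category of a morphism. -/
def StHom.mk (E : ExactStructure 𝒞) {X Y : 𝒞} (f : X ⟶ Y) : StHom E X Y :=
  Quot.mk _ f

/-- Two objects are isomorphic in the stable category. -/
def StIso (E : ExactStructure 𝒞) (X Y : 𝒞) : Prop :=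
  ∃ (f : X ⟶ Y) (g : Y ⟶ X),
    StHom.mk E (f ≫ g) = StHom.mk E (𝟙 X) ∧ StHom.mk E (g ≫ f) = StHom.mk E (𝟙 Y)

/-- The isomorphism classes of objects of the stable category. -/
def StSkel (E : ExactStructure 𝒞) : Type u := Quot (StIso E)

/-- The stable isomorphism class of an object. -/
def stCl (E : ExactStructure 𝒞) (X : 𝒞) : StSkel E := Quot.mk _ X

/-- Suspension data for a Frobenius category: for each object `X` a conflation
`X ↣ I X ↠ S X` with `I X` projective-injective; `S` implements the suspension functor `Σ`
of the stable category on objects. -/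
structure SuspData (E : ExactStructure 𝒞) where
  S : 𝒞 → 𝒞
  I : 𝒞 → 𝒞
  ins : ∀ X : 𝒞, X ⟶ I X
  out : ∀ X : 𝒞, I X ⟶ S X
  proj : ∀ X : 𝒞, E.Proj (I X)
  isConf : ∀ X : 𝒞, E.conf (ins X) (out X)

variable {E : ExactStructure 𝒞}

/-- Iterated suspension `Σⁿ` on objects. -/
def SIter (Sd : SuspData E) : ℕ → 𝒞 → 𝒞
  | 0, X => X
  | n + 1, X => Sd.S (SIter Sd n X)

/-- Syzygy data for a Frobenius category: for each object `X` a conflation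
`Ω X ↣ P X ↠ X` with `P X` projective-injective (a choice of projective covers, giving
projective resolutions). -/
structure SyzData (E : ExactStructure 𝒞) where
  Om : 𝒞 → 𝒞
  P : 𝒞 → 𝒞
  ins : ∀ X : 𝒞, Om X ⟶ P X
  out : ∀ X : 𝒞, P X ⟶ X
  proj : ∀ X : 𝒞, E.Proj (P X)
  isConf : ∀ X : 𝒞, E.conf (ins X) (out X)

/-- Iterated syzygy `Ωⁿ` on objects. -/
def OmIter (D : SyzData E) : ℕ → 𝒞 → 𝒞
  | 0, X => X
  | n + 1, X => D.Om (OmIter D n X)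

/-- The differential `P(Ωⁿ⁺¹ M) ⟶ P(Ωⁿ M)` of the projective resolution
`⋯ → P(Ω² M) → P(Ω M) → P(M) → 0` of `M` determined by syzygy data. -/
def resDiff (D : SyzData E) (n : ℕ) (M : 𝒞) :
    D.P (OmIter D (n + 1) M) ⟶ D.P (OmIter D n M) :=
  D.out (OmIter D (n + 1) M) ≫ D.ins (OmIter D n M)

/-- Cocycles for `Ext^(q+1)(M, N)`: morphisms `P(Ω^(q+1) M) ⟶ N` killed by the differential. -/
def extCocycle (D : SyzData E) (q : ℕ) (M N : 𝒞) : Type v :=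
  {f : D.P (OmIter D (q + 1) M) ⟶ N // resDiff D (q + 1) M ≫ f = 0}

/-- `Ext^(q+1)(M, N)` in the exact category: the `(q+1)`-st cohomology of
`Hom(R(M)•, N)` for the projective resolution `R(M)•` of `M` given by the syzygy data. -/
def extGrp (D : SyzData E) (q : ℕ) (M N : 𝒞) : Type v :=
  Quot (fun f g : extCocycle D q M N =>
    ∃ h : D.P (OmIter D q M) ⟶ N, f.1 - g.1 = resDiff D q M ≫ h)

/-- The truncated relative Euler form
`⟨A,B⟩ = (|Hom_F(A,B)| / |Hom_F̄(A,B)|) ⬝ ∏_{0 < i ≤ N} |Ext^{-i}_F̄(A,B)|^((-1)^(i-1))`,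
where `Ext^{-i}_F̄(A, B) = Hom_F̄(Σⁱ A, B)`.  (Under the "left locally homologically finite"
assumption all but finitely many factors are trivial, so for `N` large enough this is the
relative Euler form.) -/
noncomputable def relEulerAt (Sd : SuspData E) (N : ℕ) (A B : 𝒞) : ℚ :=
  ((Nat.card (A ⟶ B) : ℚ) / (Nat.card (StHom E A B) : ℚ)) *
    ∏ i ∈ Finset.range N, ((Nat.card (StHom E (SIter Sd (i + 1) A) B) : ℚ) ^ ((-1 : ℤ) ^ i))

/-- The truncated structure constants of the derived Hall algebra of the stable category `F̄`:
`(|Ext¹_F̄(A,C)_β| / |Hom_F̄(A,C)|) ⬝ ∏_{0 < i ≤ N} |Ext^{-i}_F̄(A,C)|^((-1)^(i-1))`, where,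
by dévissage, `Ext¹_F̄(A,C)_β` is identified with the set of classes of conflations
`C ↣ mid ↠ A` in `F` whose middle term has stable isomorphism class `β`. -/
noncomputable def stDhCoeffAt (Sd : SuspData E) (N : ℕ) (A C : 𝒞) (β : StSkel E) : ℚ :=
  ((Nat.card {x : Ext1 E A C // ∃ e : Conf E A C, Ext1.mk E e = x ∧ stCl E e.mid = β} : ℚ) /
      (Nat.card (StHom E A C) : ℚ)) *
    ∏ i ∈ Finset.range N, ((Nat.card (StHom E (SIter Sd (i + 1) A) C) : ℚ) ^ ((-1 : ℤ) ^ i))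

end Exact

/-- A bundled associative unital `ℚ`-algebra. -/
structure BundledQAlg : Type (w + 1) where
  carrier : Type w
  [ring : Ring carrier]
  [alg : Algebra ℚ carrier]

attribute [instance] BundledQAlg.ring BundledQAlg.alg

section Localization

variable {𝒞 : Type u} [Category.{v} 𝒞] [Preadditive 𝒞] [HasZeroObject 𝒞] [HasBinaryBiproducts 𝒞]

/-- A realization of the semi-derived Hall algebra `SDH(F, P(F))`: the localization of the
Hall algebra `H(F)` at the classes `[P]` of all projective-injective objects, presented by its
universal property. -/
structure HallLocalization (E : ExactStructure 𝒞) (hm : HallMul E) (A : BundledQAlg.{w}) where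
  φ : (IsoCl 𝒞 →₀ ℚ) →ₗ[ℚ] A.carrier
  mul_hom : ∀ x y, φ (hm.mul x y) = φ x * φ y
  one_hom : φ (hallBasis (0 : 𝒞)) = 1
  inverts : ∀ P : 𝒞, E.Proj P → IsUnit (φ (hallBasis P))
  universal : ∀ (B : BundledQAlg.{w}) (ψ : (IsoCl 𝒞 →₀ ℚ) →ₗ[ℚ] B.carrier),
    (∀ x y, ψ (hm.mul x y) = ψ x * ψ y) → ψ (hallBasis (0 : 𝒞)) = 1 →
    (∀ P : 𝒞, E.Proj P → IsUnit (ψ (hallBasis P))) →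
    ∃! χ : A.carrier →+* B.carrier, ∀ x, χ (φ x) = ψ x

/-- The quantum torus of projective-injectives inside the semi-derived Hall algebra:
the subalgebra generated by the classes `[P]` of projective-injective objects and their
inverses. -/
def quantumTorus {E : ExactStructure 𝒞} {hm : HallMul E} {A : BundledQAlg.{w}}
    (L : HallLocalization E hm A) : Subalgebra ℚ A.carrier :=
  Algebra.adjoin ℚ {x : A.carrier | ∃ P : 𝒞, E.Proj P ∧
    (x = L.φ (hallBasis P) ∨ (x * L.φ (hallBasis P) = 1 ∧ L.φ (hallBasis P) * x = 1))}

end Localization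

section K0

variable {𝒞 : Type u} [Category.{v} 𝒞] [Preadditive 𝒞] [HasZeroObject 𝒞] [HasBinaryBiproducts 𝒞]

/-- The relations defining the split Grothendieck group of an additive category:
isomorphic objects are identified and `[A ⊕ B] = [A] + [B]`. -/
def splitRelations (𝒞 : Type u) [Category.{v} 𝒞] [Preadditive 𝒞] [HasZeroObject 𝒞]
    [HasBinaryBiproducts 𝒞] : Set (FreeAbelianGroup 𝒞) :=
  {x | ∃ A B : 𝒞, Nonempty (A ≅ B) ∧
        x = FreeAbelianGroup.of A - FreeAbelianGroup.of B} ∪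
  {x | ∃ A B : 𝒞, x = FreeAbelianGroup.of (A ⊞ B)
        - FreeAbelianGroup.of A - FreeAbelianGroup.of B}

/-- The split Grothendieck group `K₀^split` of an additive category. -/
def K0split (𝒞 : Type u) [Category.{v} 𝒞] [Preadditive 𝒞] [HasZeroObject 𝒞]
    [HasBinaryBiproducts 𝒞] : Type u :=
  FreeAbelianGroup 𝒞 ⧸ AddSubgroup.closure (splitRelations 𝒞)

noncomputable instance : AddCommGroup (K0split 𝒞) :=
  QuotientAddGroup.Quotient.addCommGroup _

/-- The class of an object in the split Grothendieck group. -/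
def K0split.gen (A : 𝒞) : K0split 𝒞 :=
  QuotientAddGroup.mk (FreeAbelianGroup.of A)

/-- The relations defining the Grothendieck group of the (split exact) full subcategory of
projective-injective objects. -/
def projRelations (E : ExactStructure 𝒞) : Set (FreeAbelianGroup {X : 𝒞 // E.Proj X}) :=
  {x | ∃ A B : {X : 𝒞 // E.Proj X}, Nonempty (A.1 ≅ B.1) ∧
        x = FreeAbelianGroup.of A - FreeAbelianGroup.of B} ∪
  {x | ∃ A B C : {X : 𝒞 // E.Proj X}, Nonempty (C.1 ≅ A.1 ⊞ B.1) ∧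
        x = FreeAbelianGroup.of C - FreeAbelianGroup.of A - FreeAbelianGroup.of B}

/-- The Grothendieck group `K₀(P(F))` of the full subcategory of projective-injective
objects (its exact structure splits, so this is the split Grothendieck group). -/
def K0P (E : ExactStructure 𝒞) : Type u :=
  FreeAbelianGroup {X : 𝒞 // E.Proj X} ⧸ AddSubgroup.closure (projRelations E)

noncomputable instance (E : ExactStructure 𝒞) : AddCommGroup (K0P E) :=
  QuotientAddGroup.Quotient.addCommGroup _

/-- The class of a projective-injective object in `K₀(P(F))`. -/
def K0P.gen (E : ExactStructure 𝒞) (X : 𝒞) (hX : E.Proj X) : K0P E :=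
  QuotientAddGroup.mk (FreeAbelianGroup.of ⟨X, hX⟩)

end K0

section StMap

variable {𝒞' : Type u'} [Category.{v'} 𝒞'] [Preadditive 𝒞'] [HasZeroObject 𝒞']
  [HasBinaryBiproducts 𝒞']
variable {𝒞 : Type u} [Category.{v} 𝒞] [Preadditive 𝒞] [HasZeroObject 𝒞] [HasBinaryBiproducts 𝒞]

/-- The map induced on stable morphism spaces by an additive functor sending
projective-injectives to projective-injectives. -/
def stMap (E' : ExactStructure 𝒞') (E : ExactStructure 𝒞) (F : 𝒞' ⥤ 𝒞) [F.Additive]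
    (hproj : ∀ P : 𝒞', E'.Proj P → E.Proj (F.obj P)) (X Y : 𝒞') :
    StHom E' X Y → StHom E (F.obj X) (F.obj Y) :=
  Quot.map (fun f => F.map f) (by
    rintro f g ⟨P, u, v, hP, huv⟩
    exact ⟨F.obj P, F.map u, F.map v, hproj P hP, by rw [← F.map_comp, huv, F.map_sub]⟩)

end StMap

/-! ### Auxiliary development for the proof of `hall_algebra_associative_unital`. -/

section HallProof
set_option linter.unusedSectionVars false

variable {𝒞 : Type u} [Category.{v} 𝒞] [Preadditive 𝒞] [HasZeroObject 𝒞] [HasBinaryBiproducts 𝒞]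
variable {E : ExactStructure 𝒞}

/-- An inflation is a monomorphism. -/
lemma conf_mono {X Y Z : 𝒞} {i : X ⟶ Y} {p : Y ⟶ Z} (h : E.conf i p) : Mono i := by
  obtain ⟨hl⟩ := E.is_kernel h
  constructor
  intro T f g hfg
  exact Fork.IsLimit.hom_ext hl (by simpa using hfg)

/-- A deflation is an epimorphism. -/
lemma conf_epi {X Y Z : 𝒞} {i : X ⟶ Y} {p : Y ⟶ Z} (h : E.conf i p) : Epi p := by
  obtain ⟨hc⟩ := E.is_cokernel h
  constructor
  intro T f g hfg
  exact Cofork.IsColimit.hom_ext hc (by simpa using hfg)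

/-- Factorization through the kernel of a deflation. -/
lemma conf_lift {X Y Z T : 𝒞} {i : X ⟶ Y} {p : Y ⟶ Z} (h : E.conf i p)
    (t : T ⟶ Y) (ht : t ≫ p = 0) : ∃ s : T ⟶ X, s ≫ i = t := by
  obtain ⟨hl⟩ := E.is_kernel h
  obtain ⟨s, hs⟩ := KernelFork.IsLimit.lift' hl t ht
  exact ⟨s, by simpa using hs⟩

/-- Factorization through the cokernel of an inflation. -/
lemma conf_desc {X Y Z T : 𝒞} {i : X ⟶ Y} {p : Y ⟶ Z} (h : E.conf i p)
    (t : Y ⟶ T) (ht : i ≫ t = 0) : ∃ s : Z ⟶ T, p ≫ s = t := by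
  obtain ⟨hc⟩ := E.is_cokernel h
  obtain ⟨s, hs⟩ := CokernelCofork.IsColimit.desc' hc t ht
  exact ⟨s, by simpa using hs⟩

/-- Uniqueness of kernels of a fixed deflation. -/
lemma conf_ker_unique {X X' Y Z : 𝒞} {i : X ⟶ Y} {i' : X' ⟶ Y} {p : Y ⟶ Z}
    (h : E.conf i p) (h' : E.conf i' p) : ∃ e : X ≅ X', e.hom ≫ i' = i := by
  obtain ⟨hl⟩ := E.is_kernel h
  obtain ⟨hl'⟩ := E.is_kernel h'
  exact ⟨hl.conePointUniqueUpToIso hl', by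
    simpa using hl.conePointUniqueUpToIso_hom_comp hl' WalkingParallelPair.zero⟩

/-- Uniqueness of cokernels of a fixed inflation. -/
lemma conf_coker_unique {X Y Z Z' : 𝒞} {i : X ⟶ Y} {p : Y ⟶ Z} {p' : Y ⟶ Z'}
    (h : E.conf i p) (h' : E.conf i p') : ∃ e : Z ≅ Z', p ≫ e.hom = p' := by
  obtain ⟨hc⟩ := E.is_cokernel h
  obtain ⟨hc'⟩ := E.is_cokernel h'
  exact ⟨hc.coconePointUniqueUpToIso hc', by
    simpa using hc.comp_coconePointUniqueUpToIso_hom hc' WalkingParallelPair.one⟩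

/-- If `i` is an inflation with deflation `p`, any other kernel of `p` is an inflation. -/
lemma conf_of_kernel {X X' Y Z : 𝒞} {i : X ⟶ Y} {p : Y ⟶ Z} (h : E.conf i p)
    {i' : X' ⟶ Y} (w : i' ≫ p = 0) (hl : IsLimit (KernelFork.ofι i' w)) : E.conf i' p := by
  obtain ⟨hk⟩ := E.is_kernel h
  refine E.conf_iso (hk.conePointUniqueUpToIso hl) (Iso.refl Y) (Iso.refl Z) h ?_ (by simp)
  simpa using (hk.conePointUniqueUpToIso_hom_comp hl WalkingParallelPair.zero).symm

/-- Dually, any other cokernel of an inflation is a deflation. -/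
lemma conf_of_cokernel {X Y Z Z' : 𝒞} {i : X ⟶ Y} {p : Y ⟶ Z} (h : E.conf i p)
    {p' : Y ⟶ Z'} (w : i ≫ p' = 0) (hc : IsColimit (CokernelCofork.ofπ p' w)) :
    E.conf i p' := by
  obtain ⟨hk⟩ := E.is_cokernel h
  refine E.conf_iso (Iso.refl X) (Iso.refl Y) (hk.coconePointUniqueUpToIso hc) h (by simp) ?_
  simpa using (hk.comp_coconePointUniqueUpToIso_hom hc WalkingParallelPair.one)

/-- The set of conflations `C ↣ B ↠ A`. -/
def ConfSet (E : ExactStructure 𝒞) (C B A : 𝒞) : Type v :=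
  {z : (C ⟶ B) × (B ⟶ A) // E.conf z.1 z.2}

lemma confSet_finite (homFin : ∀ X Y : 𝒞, Finite (X ⟶ Y)) (C B A : 𝒞) :
    Finite (ConfSet E C B A) := by
  haveI := homFin C B; haveI := homFin B A
  exact Subtype.finite

lemma aut_finite (homFin : ∀ X Y : 𝒞, Finite (X ⟶ Y)) (B : 𝒞) : Finite (Aut B) := by
  haveI := homFin B B
  exact Finite.of_injective (fun φ : Aut B => φ.hom) fun _ _ h => Aut.ext h

/-- Transport of conflations along isomorphisms of all three terms. -/
def confSetCongr {C C' B B' A A' : 𝒞} (eC : C ≅ C') (eB : B ≅ B') (eA : A ≅ A') :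
    ConfSet E C B A ≃ ConfSet E C' B' A' where
  toFun z := ⟨(eC.inv ≫ z.1.1 ≫ eB.hom, eB.inv ≫ z.1.2 ≫ eA.hom),
    E.conf_iso eC eB eA z.2 (by simp) (by simp)⟩
  invFun z := ⟨(eC.hom ≫ z.1.1 ≫ eB.inv, eB.hom ≫ z.1.2 ≫ eA.inv),
    E.conf_iso eC.symm eB.symm eA.symm z.2 (by simp) (by simp)⟩
  left_inv z := by apply Subtype.ext; apply Prod.ext <;> simp
  right_inv z := by apply Subtype.ext; apply Prod.ext <;> simp

end HallProof

section Counting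
set_option linter.unusedSectionVars false

/-- `Nat.card` of a sigma type over a `Fintype`. -/
lemma nat_card_sigma {ι : Type w} [Fintype ι] (f : ι → Type u') [∀ i, Finite (f i)] :
    Nat.card (Σ i, f i) = ∑ i : ι, Nat.card (f i) := by
  classical
  letI := fun i => Fintype.ofFinite (f i)
  simp [Nat.card_eq_fintype_card, Fintype.card_sigma]

/-- Orbit counting for an action all of whose stabilizers have the same cardinality. -/
lemma card_mul_card_stab {G : Type w} [Group G] [Finite G] {α : Type u'} [Finite α]
    [MulAction G α] {h : ℕ} (hs : ∀ z : α, Nat.card (MulAction.stabilizer G z) = h) :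
    Nat.card α * h = Nat.card (MulAction.orbitRel.Quotient G α) * Nat.card G := by
  classical
  letI := Fintype.ofFinite (MulAction.orbitRel.Quotient G α)
  have h1 : Nat.card α =
      ∑ ω : MulAction.orbitRel.Quotient G α, Nat.card (MulAction.orbit G ω.out) :=
    (Nat.card_congr (MulAction.selfEquivSigmaOrbits G α)).trans (nat_card_sigma _)
  have h2 : ∀ z : α, Nat.card (MulAction.orbit G z) * h = Nat.card G := by
    intro z
    rw [← hs z, Nat.card_congr (MulAction.orbitEquivQuotientStabilizer G z)]
    exact (Subgroup.card_eq_card_quotient_mul_card_subgroup _).symm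
  rw [h1, Finset.sum_mul]
  simp only [h2]
  simp [Nat.card_eq_fintype_card, mul_comm]

/-- Orbit counting for a free action. -/
lemma card_of_free_action {G : Type w} [Group G] [Finite G] {α : Type u'} [Finite α]
    [MulAction G α] (hfree : ∀ (g : G) (z : α), g • z = z → g = 1) :
    Nat.card α = Nat.card (MulAction.orbitRel.Quotient G α) * Nat.card G := by
  have := card_mul_card_stab (G := G) (α := α) (h := 1) (fun z => by
    have : MulAction.stabilizer G z = ⊥ := by
      ext g
      simp only [MulAction.mem_stabilizer_iff, Subgroup.mem_bot]
      exact ⟨fun hg => hfree g z hg, fun hg => by subst hg; simp⟩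
    rw [this]
    simp)
  simpa using this

end Counting

section Riedtmann
set_option linter.unusedSectionVars false

variable {𝒞 : Type u} [Category.{v} 𝒞] [Preadditive 𝒞] [HasZeroObject 𝒞] [HasBinaryBiproducts 𝒞]
variable {E : ExactStructure 𝒞}

lemma aut_one_hom (B : 𝒞) : (1 : Aut B).hom = 𝟙 B := rfl
lemma aut_one_inv (B : 𝒞) : (1 : Aut B).inv = 𝟙 B := rfl
lemma aut_mul_hom {B : 𝒞} (φ ψ : Aut B) : (φ * ψ).hom = ψ.hom ≫ φ.hom := rfl
lemma aut_mul_inv {B : 𝒞} (φ ψ : Aut B) : (φ * ψ).inv = φ.inv ≫ ψ.inv := rfl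
@[simp] lemma aut_hom_inv_id {B : 𝒞} (φ : Aut B) : φ.hom ≫ φ.inv = 𝟙 B := Iso.hom_inv_id φ
@[simp] lemma aut_inv_hom_id {B : 𝒞} (φ : Aut B) : φ.inv ≫ φ.hom = 𝟙 B := Iso.inv_hom_id φ
@[simp] lemma aut_hom_inv_id_assoc {B Z : 𝒞} (φ : Aut B) (h : B ⟶ Z) :
    φ.hom ≫ φ.inv ≫ h = h := Iso.hom_inv_id_assoc φ h
@[simp] lemma aut_inv_hom_id_assoc {B Z : 𝒞} (φ : Aut B) (h : B ⟶ Z) :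
    φ.inv ≫ φ.hom ≫ h = h := Iso.inv_hom_id_assoc φ h
@[simp] lemma aut_trans_hom {B B' : 𝒞} (φ : Aut B) (e : B ≅ B') : (φ ≪≫ e).hom = φ.hom ≫ e.hom := rfl
@[simp] lemma aut_trans_hom' {B B' : 𝒞} (e : B' ≅ B) (φ : Aut B) : (e ≪≫ φ).hom = e.hom ≫ φ.hom := rfl

/-- `Aut B` acts on the conflations with middle term `B`. -/
def confMidSMul (E : ExactStructure 𝒞) (C B A : 𝒞) : SMul (Aut B) (ConfSet E C B A) :=
  ⟨fun φ z => ⟨(z.1.1 ≫ φ.hom, φ.inv ≫ z.1.2),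
    E.conf_iso (Iso.refl C) φ (Iso.refl A) z.2 (by simp) (by simp)⟩⟩

attribute [local instance] confMidSMul

lemma confMidSMul_fst {C B A : 𝒞} (φ : Aut B) (z : ConfSet E C B A) :
    (φ • z).1.1 = z.1.1 ≫ φ.hom := rfl

lemma confMidSMul_snd {C B A : 𝒞} (φ : Aut B) (z : ConfSet E C B A) :
    (φ • z).1.2 = φ.inv ≫ z.1.2 := rfl

def confMidAction (E : ExactStructure 𝒞) (C B A : 𝒞) : MulAction (Aut B) (ConfSet E C B A) where
  one_smul z := Subtype.ext (Prod.ext (by simp [confMidSMul_fst, aut_one_hom])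
    (by simp [confMidSMul_snd, aut_one_inv]))
  mul_smul φ ψ z := Subtype.ext (Prod.ext
    (by simp [confMidSMul_fst, aut_mul_hom])
    (by simp [confMidSMul_snd, aut_mul_inv]))

attribute [local instance] confMidAction

lemma confRel_equivalence (A C : 𝒞) : Equivalence (ConfRel E (A := A) (C := C)) where
  refl e := ⟨Iso.refl _, by simp, by simp⟩
  symm := fun {e e'} ⟨φ, h1, h2⟩ => ⟨φ.symm, by rw [← h1]; simp, by rw [← h2]; simp⟩
  trans := fun {e e' e''} ⟨φ, h1, h2⟩ ⟨ψ, g1, g2⟩ =>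
    ⟨φ ≪≫ ψ, by rw [Iso.trans_hom, ← Category.assoc, h1, g1],
      by rw [Iso.trans_hom, Category.assoc, g2, h2]⟩

lemma ext1_mk_eq_iff {A C : 𝒞} {e e' : Conf E A C} :
    Ext1.mk E e = Ext1.mk E e' ↔ ConfRel E e e' :=
  ⟨fun h => ((confRel_equivalence (E := E) A C).eqvGen_iff).1 (Quot.eqvGen_exact h),
    fun h => Quot.sound h⟩

/-- Orbits of the `Aut B`-action on conflations are the `Ext¹`-classes with middle term `B`. -/
noncomputable def orbitsEquivExt (E : ExactStructure 𝒞) (A C B : 𝒞) :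
    MulAction.orbitRel.Quotient (Aut B) (ConfSet E C B A) ≃
      {x : Ext1 E A C // ∃ e : Conf E A C, Ext1.mk E e = x ∧ Nonempty (e.mid ≅ B)} := by
  refine Equiv.ofBijective (Quotient.lift
    (fun z : ConfSet E C B A =>
      (⟨Ext1.mk E ⟨B, z.1.1, z.1.2, z.2⟩, ⟨⟨B, z.1.1, z.1.2, z.2⟩, rfl, ⟨Iso.refl B⟩⟩⟩ :
        {x : Ext1 E A C // ∃ e : Conf E A C, Ext1.mk E e = x ∧ Nonempty (e.mid ≅ B)}))
    ?_) ⟨?_, ?_⟩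
  · rintro z z' ⟨g, hg⟩
    subst hg
    refine Subtype.ext (Quot.sound ?_)
    refine ⟨g.symm, ?_, rfl⟩
    show (z'.1.1 ≫ g.hom) ≫ g.inv = z'.1.1
    simp
  · intro x y
    induction x using Quotient.ind
    induction y using Quotient.ind
    rename_i z z'
    intro hxy
    have h := ext1_mk_eq_iff.1 (Subtype.ext_iff.1 hxy)
    obtain ⟨φ, h1, h2⟩ := h
    have h1' : z.1.1 ≫ φ.hom = z'.1.1 := h1
    have h2' : φ.hom ≫ z'.1.2 = z.1.2 := h2
    refine Quotient.sound ⟨(φ : Aut B).symm, ?_⟩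
    refine Subtype.ext (Prod.ext ?_ ?_)
    · show z'.1.1 ≫ φ.inv = z.1.1
      have := congrArg (fun t => t ≫ φ.inv) h1'
      simpa using this.symm
    · show φ.hom ≫ z'.1.2 = z.1.2
      exact h2'
  · rintro ⟨x, e, rfl, ⟨ψ⟩⟩
    refine ⟨Quotient.mk _ (⟨(e.incl ≫ ψ.hom, ψ.inv ≫ e.quot),
      E.conf_iso (Iso.refl _) ψ (Iso.refl _) e.isConf (by simp) (by simp)⟩ : ConfSet E C B A), ?_⟩
    refine Subtype.ext ?_
    show Ext1.mk E _ = Ext1.mk E e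
    exact ext1_mk_eq_iff.2 (((confRel_equivalence (E := E) A C).symm) ⟨ψ, rfl, by simp⟩)

lemma stabilizer_card {A C B : 𝒞} (z : ConfSet E C B A) :
    Nat.card (MulAction.stabilizer (Aut B) z) = Nat.card (A ⟶ C) := by
  haveI : Mono z.1.1 := conf_mono z.2
  haveI : Epi z.1.2 := conf_epi z.2
  have h0 : z.1.1 ≫ z.1.2 = 0 := E.comp_zero z.2
  refine (Nat.card_congr (Equiv.ofBijective (fun h : A ⟶ C =>
    (⟨⟨𝟙 B + z.1.2 ≫ h ≫ z.1.1, 𝟙 B - z.1.2 ≫ h ≫ z.1.1,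
        by simp [Preadditive.comp_sub, Preadditive.add_comp, reassoc_of% h0],
        by simp [Preadditive.comp_add, Preadditive.sub_comp, reassoc_of% h0]⟩,
      by
        refine MulAction.mem_stabilizer_iff.2 ?_
        refine Subtype.ext (Prod.ext ?_ ?_)
        · show z.1.1 ≫ (𝟙 B + z.1.2 ≫ h ≫ z.1.1) = z.1.1
          simp [Preadditive.comp_add, reassoc_of% h0]
        · show (𝟙 B - z.1.2 ≫ h ≫ z.1.1) ≫ z.1.2 = z.1.2
          simp [Preadditive.sub_comp, Category.assoc, h0]⟩ :
      MulAction.stabilizer (Aut B) z)) ⟨?_, ?_⟩)).symm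
  · intro h h' hhh
    have := congrArg (fun w => ((w : MulAction.stabilizer (Aut B) z) : Aut B).hom) hhh
    simp only at this
    have h2 : z.1.2 ≫ h ≫ z.1.1 = z.1.2 ≫ h' ≫ z.1.1 := by
      have := add_left_cancel this
      exact this
    rw [← Category.assoc, ← Category.assoc] at h2
    exact (cancel_epi z.1.2).1 ((cancel_mono z.1.1).1 h2)
  · rintro ⟨φ, hφ⟩
    rw [MulAction.mem_stabilizer_iff] at hφ
    have e1 : z.1.1 ≫ φ.hom = z.1.1 := congrArg (fun w => (w : ConfSet E C B A).1.1) hφ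
    have e2 : φ.inv ≫ z.1.2 = z.1.2 := congrArg (fun w => (w : ConfSet E C B A).1.2) hφ
    have e2' : φ.hom ≫ z.1.2 = z.1.2 := by
      conv_lhs => rw [← e2]
      simp
    have d1 : z.1.1 ≫ (φ.hom - 𝟙 B) = 0 := by
      simp [Preadditive.comp_sub, e1]
    obtain ⟨s, hs⟩ := conf_desc z.2 (φ.hom - 𝟙 B) d1
    have d2 : s ≫ z.1.2 = 0 := by
      have : z.1.2 ≫ s ≫ z.1.2 = 0 := by
        rw [← Category.assoc, hs]
        simp [Preadditive.sub_comp, e2']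
      exact (cancel_epi z.1.2).1 (by simpa using this)
    obtain ⟨h, hh⟩ := conf_lift z.2 s d2
    refine ⟨h, Subtype.ext (Aut.ext ?_)⟩
    show 𝟙 B + z.1.2 ≫ h ≫ z.1.1 = φ.hom
    rw [hh, hs]
    abel

/-- The structure constant of the Hall algebra, written in terms of counting conflations. -/
noncomputable def cQ (E : ExactStructure 𝒞) (A C B : 𝒞) : ℚ :=
  (Nat.card (ConfSet E C B A) : ℚ) / (Nat.card (Aut B) : ℚ)

/-- Riedtmann's formula. -/
lemma hallCoeff_eq_cQ (homFin : ∀ X Y : 𝒞, Finite (X ⟶ Y)) (A C B : 𝒞) :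
    hallCoeff E A C B = cQ E A C B := by
  haveI := confSet_finite (E := E) homFin C B A
  haveI := aut_finite homFin B
  haveI := homFin A C
  have hh : 0 < Nat.card (A ⟶ C) := Nat.card_pos
  have ha : 0 < Nat.card (Aut B) := Nat.card_pos
  have e2 := card_mul_card_stab (G := Aut B) (α := ConfSet E C B A)
    (h := Nat.card (A ⟶ C)) (fun z => stabilizer_card z)
  have e1 : ext1CardWith E A C B =
      Nat.card (MulAction.orbitRel.Quotient (Aut B) (ConfSet E C B A)) :=
    Nat.card_congr (orbitsEquivExt E A C B).symm
  unfold hallCoeff cQ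
  rw [e1, div_eq_div_iff (by exact_mod_cast hh.ne') (by exact_mod_cast ha.ne')]
  exact_mod_cast e2.symm

end Riedtmann

section UV
set_option linter.unusedSectionVars false

variable {𝒞 : Type u} [Category.{v} 𝒞] [Preadditive 𝒞] [HasZeroObject 𝒞] [HasBinaryBiproducts 𝒞]
variable {E : ExactStructure 𝒞}

/-- Data of a pair of conflations `C ↣ B ↠ A` and `D ↣ X ↠ B` (a "quotient filtration"). -/
structure UElt (E : ExactStructure 𝒞) (A C D X : 𝒞) : Type (max u v) where
  B : 𝒞
  i : C ⟶ B
  p : B ⟶ A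
  j : D ⟶ X
  q : X ⟶ B
  hip : E.conf i p
  hjq : E.conf j q

/-- Data of a pair of conflations `D ↣ B ↠ C` and `B ↣ X ↠ A` (a "subobject filtration"). -/
structure VElt (E : ExactStructure 𝒞) (A C D X : 𝒞) : Type (max u v) where
  B : 𝒞
  i : D ⟶ B
  p : B ⟶ C
  j : B ⟶ X
  q : X ⟶ A
  hip : E.conf i p
  hjq : E.conf j q

variable {A C D X : 𝒞}

def uRel (u u' : UElt E A C D X) : Prop :=
  ∃ φ : u.B ≅ u'.B, u.i ≫ φ.hom = u'.i ∧ φ.hom ≫ u'.p = u.p ∧ u.q ≫ φ.hom = u'.q ∧ u.j = u'.j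

def vRel (v v' : VElt E A C D X) : Prop :=
  ∃ ψ : v.B ≅ v'.B, v.i ≫ ψ.hom = v'.i ∧ ψ.hom ≫ v'.p = v.p ∧ ψ.hom ≫ v'.j = v.j ∧ v.q = v'.q

lemma uRel_equiv : Equivalence (uRel (E := E) (A := A) (C := C) (D := D) (X := X)) where
  refl u := ⟨Iso.refl _, by simp, by simp, by simp, rfl⟩
  symm := fun {u u'} ⟨φ, h1, h2, h3, h4⟩ => ⟨φ.symm,
    by rw [← h1]; simp, by rw [← h2]; simp, by rw [← h3]; simp, h4.symm⟩
  trans := fun {u u' u''} ⟨φ, h1, h2, h3, h4⟩ ⟨ψ, g1, g2, g3, g4⟩ =>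
    ⟨φ ≪≫ ψ, by rw [Iso.trans_hom, ← Category.assoc, h1, g1],
      by rw [Iso.trans_hom, Category.assoc, g2, h2],
      by rw [Iso.trans_hom, ← Category.assoc, h3, g3], h4.trans g4⟩

lemma vRel_equiv : Equivalence (vRel (E := E) (A := A) (C := C) (D := D) (X := X)) where
  refl v := ⟨Iso.refl _, by simp, by simp, by simp, rfl⟩
  symm := fun {v v'} ⟨ψ, h1, h2, h3, h4⟩ => ⟨ψ.symm,
    by rw [← h1]; simp, by rw [← h2]; simp, by rw [← h3]; simp, h4.symm⟩
  trans := fun {v v' v''} ⟨φ, h1, h2, h3, h4⟩ ⟨ψ, g1, g2, g3, g4⟩ =>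
    ⟨φ ≪≫ ψ, by rw [Iso.trans_hom, ← Category.assoc, h1, g1],
      by rw [Iso.trans_hom, Category.assoc, g2, h2],
      by rw [Iso.trans_hom, Category.assoc, g3, h3], h4.trans g4⟩

def uSetoid (E : ExactStructure 𝒞) (A C D X : 𝒞) : Setoid (UElt E A C D X) :=
  ⟨uRel, uRel_equiv⟩

def vSetoid (E : ExactStructure 𝒞) (A C D X : 𝒞) : Setoid (VElt E A C D X) :=
  ⟨vRel, vRel_equiv⟩

/-- The Noether correspondence relation between `U`- and `V`-data. -/
def Rrel (u : UElt E A C D X) (v : VElt E A C D X) : Prop :=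
  u.j = v.i ≫ v.j ∧ v.j ≫ u.q = v.p ≫ u.i ∧ u.q ≫ u.p = v.q

lemma Rrel_exists_v (u : UElt E A C D X) : ∃ v, Rrel u v := by
  obtain ⟨Y', p'', g, hpb, W, i₀, hconf₀⟩ := E.pullback_defl u.hjq u.i
  have hj0 : u.j ≫ u.q = (0 : D ⟶ C) ≫ u.i := by simp [E.comp_zero u.hjq]
  have hjDg : hpb.lift u.j 0 hj0 ≫ g = u.j := hpb.lift_fst _ _ _
  have hjDp : hpb.lift u.j 0 hj0 ≫ p'' = 0 := hpb.lift_snd _ _ _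
  haveI : Mono u.j := conf_mono u.hjq
  haveI : Mono u.i := conf_mono u.hip
  haveI monojD : Mono (hpb.lift u.j 0 hj0) := by
    have h : Mono (hpb.lift u.j 0 hj0 ≫ g) := by rw [hjDg]; infer_instance
    exact mono_of_mono _ g
  have hker : IsLimit (KernelFork.ofι (hpb.lift u.j 0 hj0) hjDp) := by
    refine KernelFork.IsLimit.ofι' _ _ (fun {T} k hk => ?_)
    have hkg : (k ≫ g) ≫ u.q = 0 := by
      rw [Category.assoc, hpb.w, ← Category.assoc, hk, zero_comp]
    have hs := conf_lift u.hjq (k ≫ g) hkg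
    refine ⟨hs.choose, hpb.hom_ext ?_ ?_⟩
    · rw [Category.assoc, hjDg, hs.choose_spec]
    · rw [Category.assoc, hjDp, comp_zero, hk]
  have confjD : E.conf (hpb.lift u.j 0 hj0) p'' := conf_of_kernel hconf₀ hjDp hker
  obtain ⟨W₁, i₁, hconf₁⟩ := E.defl_comp u.q u.p ⟨D, u.j, u.hjq⟩ ⟨C, u.i, u.hip⟩
  have hg0 : g ≫ u.q ≫ u.p = 0 := by
    rw [← Category.assoc, hpb.w, Category.assoc, E.comp_zero u.hip, comp_zero]
  have hker2 : IsLimit (KernelFork.ofι g hg0) := by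
    haveI monog : Mono g := by
      constructor; intro T a b hab
      refine hpb.hom_ext hab ?_
      have h2 : (a ≫ p'') ≫ u.i = (b ≫ p'') ≫ u.i := by
        rw [Category.assoc, Category.assoc, ← hpb.w, ← Category.assoc, ← Category.assoc, hab]
      exact (cancel_mono u.i).1 h2
    refine KernelFork.IsLimit.ofι' _ _ (fun {T} k hk => ?_)
    have hkq : (k ≫ u.q) ≫ u.p = 0 := by rw [Category.assoc]; exact hk
    have hs := conf_lift u.hip (k ≫ u.q) hkq
    exact ⟨hpb.lift k hs.choose hs.choose_spec.symm, hpb.lift_fst _ _ _⟩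
  have confg : E.conf g (u.q ≫ u.p) := conf_of_kernel hconf₁ hg0 hker2
  exact ⟨⟨Y', hpb.lift u.j 0 hj0, p'', g, u.q ≫ u.p, confjD, confg⟩, hjDg.symm, hpb.w, rfl⟩

lemma Rrel_exists_u (v : VElt E A C D X) : ∃ u, Rrel u v := by
  obtain ⟨Y'', i₂, g₂, hpo, W, p₂, hconf₂⟩ := E.pushout_infl v.hjq v.p
  have hw : v.j ≫ g₂ = v.p ≫ i₂ := hpo.w
  haveI : Epi v.p := conf_epi v.hip
  haveI : Epi v.q := conf_epi v.hjq
  have hji : (v.i ≫ v.j) ≫ g₂ = 0 := by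
    rw [Category.assoc, hw, ← Category.assoc, E.comp_zero v.hip, zero_comp]
  have hcoker : IsColimit (CokernelCofork.ofπ g₂ hji) := by
    haveI epig : Epi g₂ := by
      constructor; intro T a b hab
      refine hpo.hom_ext hab ?_
      have h2 : v.p ≫ i₂ ≫ a = v.p ≫ i₂ ≫ b := by
        rw [← Category.assoc, ← hw, Category.assoc, hab, ← Category.assoc, hw, Category.assoc]
      exact (cancel_epi v.p).1 h2
    refine CokernelCofork.IsColimit.ofπ' _ _ (fun {T} k hk => ?_)
    have hjk : v.i ≫ v.j ≫ k = 0 := by rw [← Category.assoc]; exact hk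
    have hs := conf_desc v.hip (v.j ≫ k) hjk
    exact ⟨hpo.desc k hs.choose hs.choose_spec.symm, hpo.inl_desc _ _ _⟩
  have confjq : E.conf (v.i ≫ v.j) g₂ := by
    obtain ⟨W₀, q₀, h₀⟩ := E.infl_comp v.i v.j ⟨C, v.p, v.hip⟩ ⟨A, v.q, v.hjq⟩
    exact conf_of_cokernel h₀ hji hcoker
  have hdw : v.j ≫ v.q = v.p ≫ (0 : C ⟶ A) := by simp [E.comp_zero v.hjq]
  have hg₂p : g₂ ≫ hpo.desc v.q 0 hdw = v.q := hpo.inl_desc _ _ _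
  have hi₂p : i₂ ≫ hpo.desc v.q 0 hdw = 0 := hpo.inr_desc _ _ _
  have hcoker2 : IsColimit (CokernelCofork.ofπ (hpo.desc v.q 0 hdw) hi₂p) := by
    haveI epip : Epi (hpo.desc v.q 0 hdw) := by
      have h : Epi (g₂ ≫ hpo.desc v.q 0 hdw) := by rw [hg₂p]; infer_instance
      exact epi_of_epi g₂ _
    refine CokernelCofork.IsColimit.ofπ' _ _ (fun {T} k hk => ?_)
    have hjgk' : v.j ≫ (g₂ ≫ k) = v.p ≫ (i₂ ≫ k) := by
      rw [← Category.assoc, ← Category.assoc, hw]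
    have hjgk'' : v.j ≫ g₂ ≫ k = 0 := by rw [hjgk', hk, comp_zero]
    have hs := conf_desc v.hjq (g₂ ≫ k) hjgk''
    refine ⟨hs.choose, hpo.hom_ext ?_ ?_⟩
    · rw [← Category.assoc, hg₂p, hs.choose_spec]
    · rw [← Category.assoc, hi₂p, zero_comp, hk]
  have confip : E.conf i₂ (hpo.desc v.q 0 hdw) := conf_of_cokernel hconf₂ hi₂p hcoker2
  exact ⟨⟨Y'', i₂, hpo.desc v.q 0 hdw, v.i ≫ v.j, g₂, confip, confjq⟩, rfl, hw, hg₂p⟩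

lemma Rrel_unique_v {u : UElt E A C D X} {v v₁ : VElt E A C D X}
    (h : Rrel u v) (h₁ : Rrel u v₁) : vRel v v₁ := by
  obtain ⟨a1, a2, a3⟩ := h; obtain ⟨b1, b2, b3⟩ := h₁
  haveI : Mono u.i := conf_mono u.hip
  haveI : Mono v₁.j := conf_mono v₁.hjq
  have hq : v.q = v₁.q := a3 ▸ b3 ▸ rfl
  have hconf₁' : E.conf v₁.j v.q := by rw [hq]; exact v₁.hjq
  obtain ⟨ψ, hψ⟩ := conf_ker_unique v.hjq hconf₁'
  refine ⟨ψ, ?_, ?_, hψ, hq⟩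
  · rw [← cancel_mono v₁.j, Category.assoc, hψ, ← a1, b1]
  · rw [← cancel_mono u.i, Category.assoc, ← b2, ← Category.assoc, hψ, a2]

lemma Rrel_unique_u {u u₁ : UElt E A C D X} {v : VElt E A C D X}
    (h : Rrel u v) (h₁ : Rrel u₁ v) : uRel u u₁ := by
  obtain ⟨a1, a2, a3⟩ := h; obtain ⟨b1, b2, b3⟩ := h₁
  haveI : Epi v.p := conf_epi v.hip
  haveI : Epi u.q := conf_epi u.hjq
  have hj : u.j = u₁.j := a1.trans b1.symm
  have hconf' : E.conf u.j u₁.q := by rw [hj]; exact u₁.hjq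
  obtain ⟨φ, hφ⟩ := conf_coker_unique u.hjq hconf'
  refine ⟨φ, ?_, ?_, hφ, hj⟩
  · rw [← cancel_epi v.p, ← Category.assoc, ← a2, Category.assoc, hφ, b2]
  · rw [← cancel_epi u.q, ← Category.assoc, hφ, b3, ← a3]

lemma Rrel_of_uRel {u u₁ : UElt E A C D X} {v : VElt E A C D X}
    (huu : uRel u u₁) (h : Rrel u v) : Rrel u₁ v := by
  obtain ⟨φ, h1, h2, h3, h4⟩ := huu; obtain ⟨a1, a2, a3⟩ := h
  refine ⟨h4 ▸ a1, ?_, ?_⟩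
  · rw [← h3, ← h1, ← Category.assoc, a2, Category.assoc]
  · rw [← h3, Category.assoc, h2, a3]

lemma Rrel_of_vRel {v v₁ : VElt E A C D X} {u : UElt E A C D X}
    (hvv : vRel v v₁) (h : Rrel u v) : Rrel u v₁ := by
  obtain ⟨ψ, h1, h2, h3, h4⟩ := hvv; obtain ⟨a1, a2, a3⟩ := h
  refine ⟨?_, ?_, h4 ▸ a3⟩
  · rw [a1, ← h3, ← Category.assoc, h1]
  · rw [← cancel_epi ψ.hom, ← Category.assoc, ← Category.assoc, h3, h2, a2]

def UQuot (E : ExactStructure 𝒞) (A C D X : 𝒞) : Type (max u v) :=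
  Quotient (uSetoid E A C D X)

def VQuot (E : ExactStructure 𝒞) (A C D X : 𝒞) : Type (max u v) :=
  Quotient (vSetoid E A C D X)

/-- The Noether bijection between quotient filtrations and subobject filtrations. -/
noncomputable def uvEquiv (E : ExactStructure 𝒞) (A C D X : 𝒞) :
    UQuot E A C D X ≃ VQuot E A C D X where
  toFun := Quotient.lift
    (fun u => Quotient.mk (vSetoid E A C D X) (Classical.choose (Rrel_exists_v u)))
    (fun u u' huu => Quotient.sound
      (Rrel_unique_v (Rrel_of_uRel huu (Classical.choose_spec (Rrel_exists_v u)))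
        (Classical.choose_spec (Rrel_exists_v u'))))
  invFun := Quotient.lift
    (fun v => Quotient.mk (uSetoid E A C D X) (Classical.choose (Rrel_exists_u v)))
    (fun v v' hvv => Quotient.sound
      (Rrel_unique_u (Rrel_of_vRel hvv (Classical.choose_spec (Rrel_exists_u v)))
        (Classical.choose_spec (Rrel_exists_u v'))))
  left_inv := by
    refine Quotient.ind (fun u => ?_)
    exact Quotient.sound (Rrel_unique_u
      (Classical.choose_spec (Rrel_exists_u (Classical.choose (Rrel_exists_v u))))
      (Classical.choose_spec (Rrel_exists_v u)))
  right_inv := by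
    refine Quotient.ind (fun v => ?_)
    exact Quotient.sound (Rrel_unique_v
      (Classical.choose_spec (Rrel_exists_v (Classical.choose (Rrel_exists_u v))))
      (Classical.choose_spec (Rrel_exists_u v)))

end UV

section UVCount
set_option linter.unusedSectionVars false
set_option maxHeartbeats 1000000

variable {𝒞 : Type u} [Category.{v} 𝒞] [Preadditive 𝒞] [HasZeroObject 𝒞] [HasBinaryBiproducts 𝒞]
variable {E : ExactStructure 𝒞}

/-- The isomorphism class of the "middle" object of a `U`-datum. -/
def uCl (E : ExactStructure 𝒞) (A C D X : 𝒞) : UQuot E A C D X → IsoCl 𝒞 :=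
  Quotient.lift (fun u => skel u.B) (fun _ _ h => Quotient.sound ⟨h.choose⟩)

def vCl (E : ExactStructure 𝒞) (A C D X : 𝒞) : VQuot E A C D X → IsoCl 𝒞 :=
  Quotient.lift (fun v => skel v.B) (fun _ _ h => Quotient.sound ⟨h.choose⟩)

def uSMul (E : ExactStructure 𝒞) (A C D X B : 𝒞) :
    SMul (Aut B) (ConfSet E C B A × ConfSet E D X B) :=
  ⟨fun φ z => (⟨(z.1.1.1 ≫ φ.hom, φ.inv ≫ z.1.1.2),
      E.conf_iso (Iso.refl C) φ (Iso.refl A) z.1.2 (by simp) (by simp)⟩,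
    ⟨(z.2.1.1, z.2.1.2 ≫ φ.hom),
      E.conf_iso (Iso.refl D) (Iso.refl X) φ z.2.2 (by simp) (by simp)⟩)⟩

attribute [local instance] uSMul

def uAction (E : ExactStructure 𝒞) (A C D X B : 𝒞) :
    MulAction (Aut B) (ConfSet E C B A × ConfSet E D X B) where
  one_smul z := by
    refine Prod.ext (Subtype.ext (Prod.ext ?_ ?_)) (Subtype.ext (Prod.ext ?_ ?_))
    · show z.1.1.1 ≫ (1 : Aut B).hom = z.1.1.1
      simp [aut_one_hom]
    · show (1 : Aut B).inv ≫ z.1.1.2 = z.1.1.2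
      simp [aut_one_inv]
    · show z.2.1.1 = z.2.1.1
      rfl
    · show z.2.1.2 ≫ (1 : Aut B).hom = z.2.1.2
      simp [aut_one_hom]
  mul_smul φ ψ z := by
    refine Prod.ext (Subtype.ext (Prod.ext ?_ ?_)) (Subtype.ext (Prod.ext ?_ ?_))
    · show z.1.1.1 ≫ (φ * ψ).hom = (z.1.1.1 ≫ ψ.hom) ≫ φ.hom
      simp [aut_mul_hom]
    · show (φ * ψ).inv ≫ z.1.1.2 = φ.inv ≫ ψ.inv ≫ z.1.1.2
      simp [aut_mul_inv]
    · show z.2.1.1 = z.2.1.1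
      rfl
    · show z.2.1.2 ≫ (φ * ψ).hom = (z.2.1.2 ≫ ψ.hom) ≫ φ.hom
      simp [aut_mul_hom]

attribute [local instance] uAction

def vSMul (E : ExactStructure 𝒞) (A C D X B : 𝒞) :
    SMul (Aut B) (ConfSet E D B C × ConfSet E B X A) :=
  ⟨fun φ z => (⟨(z.1.1.1 ≫ φ.hom, φ.inv ≫ z.1.1.2),
      E.conf_iso (Iso.refl D) φ (Iso.refl C) z.1.2 (by simp) (by simp)⟩,
    ⟨(φ.inv ≫ z.2.1.1, z.2.1.2),
      E.conf_iso φ (Iso.refl X) (Iso.refl A) z.2.2 (by simp) (by simp)⟩)⟩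

attribute [local instance] vSMul

def vAction (E : ExactStructure 𝒞) (A C D X B : 𝒞) :
    MulAction (Aut B) (ConfSet E D B C × ConfSet E B X A) where
  one_smul z := by
    refine Prod.ext (Subtype.ext (Prod.ext ?_ ?_)) (Subtype.ext (Prod.ext ?_ ?_))
    · show z.1.1.1 ≫ (1 : Aut B).hom = z.1.1.1
      simp [aut_one_hom]
    · show (1 : Aut B).inv ≫ z.1.1.2 = z.1.1.2
      simp [aut_one_inv]
    · show (1 : Aut B).inv ≫ z.2.1.1 = z.2.1.1
      simp [aut_one_inv]
    · show z.2.1.2 = z.2.1.2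
      rfl
  mul_smul φ ψ z := by
    refine Prod.ext (Subtype.ext (Prod.ext ?_ ?_)) (Subtype.ext (Prod.ext ?_ ?_))
    · show z.1.1.1 ≫ (φ * ψ).hom = (z.1.1.1 ≫ ψ.hom) ≫ φ.hom
      simp [aut_mul_hom]
    · show (φ * ψ).inv ≫ z.1.1.2 = φ.inv ≫ ψ.inv ≫ z.1.1.2
      simp [aut_mul_inv]
    · show (φ * ψ).inv ≫ z.2.1.1 = φ.inv ≫ ψ.inv ≫ z.2.1.1
      simp [aut_mul_inv]
    · show z.2.1.2 = z.2.1.2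
      rfl

attribute [local instance] vAction

variable (E) in
/-- Orbits of the product action are the fibers of `uCl`. -/
noncomputable def fiberEquivU (A C D X B : 𝒞) (β : IsoCl 𝒞) (hB : skel B = β) :
    MulAction.orbitRel.Quotient (Aut B) (ConfSet E C B A × ConfSet E D X B) ≃
      {x : UQuot E A C D X // uCl E A C D X x = β} := by
  refine Equiv.ofBijective (Quotient.lift
    (fun z : ConfSet E C B A × ConfSet E D X B =>
      (⟨Quotient.mk (uSetoid E A C D X)
          ⟨B, z.1.1.1, z.1.1.2, z.2.1.1, z.2.1.2, z.1.2, z.2.2⟩, hB⟩ :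
        {x : UQuot E A C D X // uCl E A C D X x = β})) ?_) ⟨?_, ?_⟩
  · rintro z z' ⟨g, hg⟩
    subst hg
    refine Subtype.ext (Quotient.sound ?_)
    refine ⟨g.symm, ?_, rfl, ?_, rfl⟩
    · show (z'.1.1.1 ≫ g.hom) ≫ g.inv = z'.1.1.1
      simp
    · show (z'.2.1.2 ≫ g.hom) ≫ g.inv = z'.2.1.2
      simp
  · intro x y
    induction x using Quotient.ind
    induction y using Quotient.ind
    rename_i z z'
    intro hxy
    obtain ⟨φ, h1, h2, h3, h4⟩ := Quotient.exact (Subtype.ext_iff.1 hxy)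
    have h1' : z.1.1.1 ≫ φ.hom = z'.1.1.1 := h1
    have h2' : φ.hom ≫ z'.1.1.2 = z.1.1.2 := h2
    have h3' : z.2.1.2 ≫ φ.hom = z'.2.1.2 := h3
    have h4' : z.2.1.1 = z'.2.1.1 := h4
    refine Quotient.sound ⟨(φ : Aut B).symm, ?_⟩
    refine Prod.ext (Subtype.ext (Prod.ext ?_ ?_)) (Subtype.ext (Prod.ext ?_ ?_))
    · show z'.1.1.1 ≫ φ.inv = z.1.1.1
      have := congrArg (fun t => t ≫ φ.inv) h1'
      simpa using this.symm
    · show φ.hom ≫ z'.1.1.2 = z.1.1.2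
      exact h2'
    · show z'.2.1.1 = z.2.1.1
      exact h4'.symm
    · show z'.2.1.2 ≫ φ.inv = z.2.1.2
      have := congrArg (fun t => t ≫ φ.inv) h3'
      simpa using this.symm
  · rintro ⟨x, hx⟩
    induction x using Quotient.ind
    rename_i u
    obtain ⟨e⟩ : Nonempty (u.B ≅ B) := Quotient.exact (hx.trans hB.symm)
    refine ⟨Quotient.mk (MulAction.orbitRel (Aut B) _)
      ((⟨(u.i ≫ e.hom, e.inv ≫ u.p),
          E.conf_iso (Iso.refl C) e (Iso.refl A) u.hip (by simp) (by simp)⟩,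
        ⟨(u.j, u.q ≫ e.hom),
          E.conf_iso (Iso.refl D) (Iso.refl X) e u.hjq (by simp) (by simp)⟩) :
        ConfSet E C B A × ConfSet E D X B), ?_⟩
    refine Subtype.ext (Quotient.sound ((uRel_equiv).symm ⟨e, rfl, ?_, rfl, rfl⟩))
    show e.hom ≫ e.inv ≫ u.p = u.p
    simp

variable (E) in
noncomputable def fiberEquivV (A C D X B : 𝒞) (β : IsoCl 𝒞) (hB : skel B = β) :
    MulAction.orbitRel.Quotient (Aut B) (ConfSet E D B C × ConfSet E B X A) ≃
      {x : VQuot E A C D X // vCl E A C D X x = β} := by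
  refine Equiv.ofBijective (Quotient.lift
    (fun z : ConfSet E D B C × ConfSet E B X A =>
      (⟨Quotient.mk (vSetoid E A C D X)
          ⟨B, z.1.1.1, z.1.1.2, z.2.1.1, z.2.1.2, z.1.2, z.2.2⟩, hB⟩ :
        {x : VQuot E A C D X // vCl E A C D X x = β})) ?_) ⟨?_, ?_⟩
  · rintro z z' ⟨g, hg⟩
    subst hg
    refine Subtype.ext (Quotient.sound ?_)
    refine ⟨g.symm, ?_, rfl, rfl, rfl⟩
    · show (z'.1.1.1 ≫ g.hom) ≫ g.inv = z'.1.1.1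
      simp
  · intro x y
    induction x using Quotient.ind
    induction y using Quotient.ind
    rename_i z z'
    intro hxy
    obtain ⟨φ, h1, h2, h3, h4⟩ := Quotient.exact (Subtype.ext_iff.1 hxy)
    have h1' : z.1.1.1 ≫ φ.hom = z'.1.1.1 := h1
    have h2' : φ.hom ≫ z'.1.1.2 = z.1.1.2 := h2
    have h3' : φ.hom ≫ z'.2.1.1 = z.2.1.1 := h3
    have h4' : z.2.1.2 = z'.2.1.2 := h4
    refine Quotient.sound ⟨(φ : Aut B).symm, ?_⟩
    refine Prod.ext (Subtype.ext (Prod.ext ?_ ?_)) (Subtype.ext (Prod.ext ?_ ?_))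
    · show z'.1.1.1 ≫ φ.inv = z.1.1.1
      have := congrArg (fun t => t ≫ φ.inv) h1'
      simpa using this.symm
    · show φ.hom ≫ z'.1.1.2 = z.1.1.2
      exact h2'
    · show φ.hom ≫ z'.2.1.1 = z.2.1.1
      exact h3'
    · show z'.2.1.2 = z.2.1.2
      exact h4'.symm
  · rintro ⟨x, hx⟩
    induction x using Quotient.ind
    rename_i v
    obtain ⟨e⟩ : Nonempty (v.B ≅ B) := Quotient.exact (hx.trans hB.symm)
    refine ⟨Quotient.mk (MulAction.orbitRel (Aut B) _)
      ((⟨(v.i ≫ e.hom, e.inv ≫ v.p),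
          E.conf_iso (Iso.refl D) e (Iso.refl C) v.hip (by simp) (by simp)⟩,
        ⟨(e.inv ≫ v.j, v.q),
          E.conf_iso e (Iso.refl X) (Iso.refl A) v.hjq (by simp) (by simp)⟩) :
        ConfSet E D B C × ConfSet E B X A), ?_⟩
    refine Subtype.ext (Quotient.sound ((vRel_equiv).symm ⟨e, rfl, ?_, ?_, rfl⟩))
    · show e.hom ≫ e.inv ≫ v.p = v.p
      simp
    · show e.hom ≫ e.inv ≫ v.j = v.j
      simp

lemma card_fiber_u (homFin : ∀ X Y : 𝒞, Finite (X ⟶ Y)) (A C D X B : 𝒞) (β : IsoCl 𝒞)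
    (hB : skel B = β) :
    Nat.card (ConfSet E C B A) * Nat.card (ConfSet E D X B) =
      Nat.card {x : UQuot E A C D X // uCl E A C D X x = β} * Nat.card (Aut B) := by
  haveI := confSet_finite (E := E) homFin C B A
  haveI := confSet_finite (E := E) homFin D X B
  haveI := aut_finite homFin B
  rw [← Nat.card_prod, ← Nat.card_congr (fiberEquivU E A C D X B β hB)]
  refine card_of_free_action (fun g z hz => ?_)
  have h := congrArg (fun w : ConfSet E C B A × ConfSet E D X B => w.2.1.2) hz
  haveI : Epi z.2.1.2 := conf_epi z.2.2
  have h' : z.2.1.2 ≫ g.hom = z.2.1.2 ≫ 𝟙 B := by rw [Category.comp_id]; exact h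
  exact Aut.ext ((cancel_epi z.2.1.2).1 h')

lemma card_fiber_v (homFin : ∀ X Y : 𝒞, Finite (X ⟶ Y)) (A C D X B : 𝒞) (β : IsoCl 𝒞)
    (hB : skel B = β) :
    Nat.card (ConfSet E D B C) * Nat.card (ConfSet E B X A) =
      Nat.card {x : VQuot E A C D X // vCl E A C D X x = β} * Nat.card (Aut B) := by
  haveI := confSet_finite (E := E) homFin D B C
  haveI := confSet_finite (E := E) homFin B X A
  haveI := aut_finite homFin B
  rw [← Nat.card_prod, ← Nat.card_congr (fiberEquivV E A C D X B β hB)]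
  refine card_of_free_action (fun g z hz => ?_)
  have h := congrArg (fun w : ConfSet E D B C × ConfSet E B X A => w.2.1.1) hz
  haveI : Mono z.2.1.1 := conf_mono z.2.2
  have h' : g.hom ≫ z.2.1.1 = 𝟙 B ≫ z.2.1.1 := by
    have h'' : g.inv ≫ z.2.1.1 = z.2.1.1 := h
    have := congrArg (fun t => g.hom ≫ t) h''
    simpa using this.symm
  exact Aut.ext ((cancel_mono z.2.1.1).1 h')

lemma skel_out_eq (β : IsoCl 𝒞) : skel (Quotient.out β) = β := Quotient.out_eq β

/-- The isomorphism class of the middle object of an `Ext¹`-class. -/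
def midCl (E : ExactStructure 𝒞) (A C : 𝒞) : Ext1 E A C → IsoCl 𝒞 :=
  Quot.lift (fun e => skel e.mid) (fun _ _ h => Quotient.sound ⟨h.choose⟩)

lemma confSet_nonempty_mem_range {A C B : 𝒞} (z : ConfSet E C B A) :
    skel B ∈ Set.range (midCl E A C) :=
  ⟨Ext1.mk E ⟨B, z.1.1, z.1.2, z.2⟩, rfl⟩

lemma support_finite (extFin : ∀ X Y : 𝒞, Finite (Ext1 E X Y)) (A C : 𝒞) :
    {β : IsoCl 𝒞 | Nonempty (ConfSet E C (Quotient.out β) A)}.Finite := by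
  haveI := extFin A C
  refine Set.Finite.subset (Set.finite_range (midCl E A C)) ?_
  rintro β ⟨z⟩
  have h := confSet_nonempty_mem_range z
  rwa [skel_out_eq] at h

lemma fiberU_nonempty_confSets {A C D X : 𝒞} {β : IsoCl 𝒞}
    (x : UQuot E A C D X) (hx : uCl E A C D X x = β) :
    Nonempty (ConfSet E C (Quotient.out β) A) ∧ Nonempty (ConfSet E D X (Quotient.out β)) := by
  induction x using Quotient.ind
  rename_i u
  have h1 : skel u.B = β := hx
  obtain ⟨e⟩ : Nonempty (u.B ≅ Quotient.out β) :=
    Quotient.exact (h1.trans (skel_out_eq β).symm)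
  exact ⟨⟨(confSetCongr (Iso.refl C) e (Iso.refl A)) ⟨(u.i, u.p), u.hip⟩⟩,
    ⟨(confSetCongr (Iso.refl D) (Iso.refl X) e) ⟨(u.j, u.q), u.hjq⟩⟩⟩

lemma fiberV_nonempty_confSets {A C D X : 𝒞} {β : IsoCl 𝒞}
    (x : VQuot E A C D X) (hx : vCl E A C D X x = β) :
    Nonempty (ConfSet E D (Quotient.out β) C) ∧ Nonempty (ConfSet E (Quotient.out β) X A) := by
  induction x using Quotient.ind
  rename_i v
  have h1 : skel v.B = β := hx
  obtain ⟨e⟩ : Nonempty (v.B ≅ Quotient.out β) :=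
    Quotient.exact (h1.trans (skel_out_eq β).symm)
  exact ⟨⟨(confSetCongr (Iso.refl D) e (Iso.refl C)) ⟨(v.i, v.p), v.hip⟩⟩,
    ⟨(confSetCongr e (Iso.refl X) (Iso.refl A)) ⟨(v.j, v.q), v.hjq⟩⟩⟩

lemma card_uquot (homFin : ∀ X Y : 𝒞, Finite (X ⟶ Y)) (A C D X : 𝒞)
    (T : Finset (IsoCl 𝒞))
    (hT : ∀ β : IsoCl 𝒞, Nonempty (ConfSet E C (Quotient.out β) A) →
      Nonempty (ConfSet E D X (Quotient.out β)) → β ∈ T) :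
    (Nat.card (UQuot E A C D X) : ℚ) =
      ∑ β ∈ T, (Nat.card (ConfSet E C (Quotient.out β) A) : ℚ) *
        (Nat.card (ConfSet E D X (Quotient.out β)) : ℚ) /
          (Nat.card (Aut (Quotient.out β)) : ℚ) := by
  classical
  haveI fFin : ∀ β : IsoCl 𝒞, Finite {x : UQuot E A C D X // uCl E A C D X x = β} := by
    intro β
    haveI := confSet_finite (E := E) homFin C (Quotient.out β) A
    haveI := confSet_finite (E := E) homFin D X (Quotient.out β)
    haveI := aut_finite homFin (Quotient.out β)
    exact Finite.of_equiv _ (fiberEquivU E A C D X (Quotient.out β) β (skel_out_eq β))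
  have eT : UQuot E A C D X ≃ Σ β : T, {x : UQuot E A C D X // uCl E A C D X x = β} :=
    { toFun := fun x => ⟨⟨uCl E A C D X x, by
        obtain ⟨h1, h2⟩ := fiberU_nonempty_confSets x rfl
        exact hT _ h1 h2⟩, ⟨x, rfl⟩⟩
      invFun := fun σ => σ.2.1
      left_inv := fun x => rfl
      right_inv := by
        rintro ⟨⟨β, hβ⟩, ⟨x, hx⟩⟩
        have hx' : uCl E A C D X x = β := hx
        subst hx'
        rfl }
  have hcard : Nat.card (UQuot E A C D X) =
      ∑ β : T, Nat.card {x : UQuot E A C D X // uCl E A C D X x = (β : IsoCl 𝒞)} :=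
    (Nat.card_congr eT).trans (nat_card_sigma _)
  rw [hcard]
  push_cast
  rw [← Finset.sum_coe_sort T (fun β => (Nat.card (ConfSet E C (Quotient.out β) A) : ℚ) *
        (Nat.card (ConfSet E D X (Quotient.out β)) : ℚ) /
          (Nat.card (Aut (Quotient.out β)) : ℚ))]
  refine Finset.sum_congr rfl (fun β _ => ?_)
  haveI := confSet_finite (E := E) homFin C (Quotient.out (β : IsoCl 𝒞)) A
  haveI := confSet_finite (E := E) homFin D X (Quotient.out (β : IsoCl 𝒞))
  haveI := aut_finite homFin (Quotient.out (β : IsoCl 𝒞))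
  have ha : (0 : ℚ) < (Nat.card (Aut (Quotient.out (β : IsoCl 𝒞))) : ℚ) := by
    exact_mod_cast Nat.card_pos
  rw [eq_div_iff ha.ne']
  exact_mod_cast (card_fiber_u homFin A C D X (Quotient.out (β : IsoCl 𝒞)) β
    (skel_out_eq (β : IsoCl 𝒞))).symm

lemma card_vquot (homFin : ∀ X Y : 𝒞, Finite (X ⟶ Y)) (A C D X : 𝒞)
    (T : Finset (IsoCl 𝒞))
    (hT : ∀ β : IsoCl 𝒞, Nonempty (ConfSet E D (Quotient.out β) C) →
      Nonempty (ConfSet E (Quotient.out β) X A) → β ∈ T) :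
    (Nat.card (VQuot E A C D X) : ℚ) =
      ∑ β ∈ T, (Nat.card (ConfSet E D (Quotient.out β) C) : ℚ) *
        (Nat.card (ConfSet E (Quotient.out β) X A) : ℚ) /
          (Nat.card (Aut (Quotient.out β)) : ℚ) := by
  classical
  haveI fFin : ∀ β : IsoCl 𝒞, Finite {x : VQuot E A C D X // vCl E A C D X x = β} := by
    intro β
    haveI := confSet_finite (E := E) homFin D (Quotient.out β) C
    haveI := confSet_finite (E := E) homFin (Quotient.out β) X A
    haveI := aut_finite homFin (Quotient.out β)
    exact Finite.of_equiv _ (fiberEquivV E A C D X (Quotient.out β) β (skel_out_eq β))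
  have eT : VQuot E A C D X ≃ Σ β : T, {x : VQuot E A C D X // vCl E A C D X x = β} :=
    { toFun := fun x => ⟨⟨vCl E A C D X x, by
        obtain ⟨h1, h2⟩ := fiberV_nonempty_confSets x rfl
        exact hT _ h1 h2⟩, ⟨x, rfl⟩⟩
      invFun := fun σ => σ.2.1
      left_inv := fun x => rfl
      right_inv := by
        rintro ⟨⟨β, hβ⟩, ⟨x, hx⟩⟩
        have hx' : vCl E A C D X x = β := hx
        subst hx'
        rfl }
  have hcard : Nat.card (VQuot E A C D X) =
      ∑ β : T, Nat.card {x : VQuot E A C D X // vCl E A C D X x = (β : IsoCl 𝒞)} :=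
    (Nat.card_congr eT).trans (nat_card_sigma _)
  rw [hcard]
  push_cast
  rw [← Finset.sum_coe_sort T (fun β => (Nat.card (ConfSet E D (Quotient.out β) C) : ℚ) *
        (Nat.card (ConfSet E (Quotient.out β) X A) : ℚ) /
          (Nat.card (Aut (Quotient.out β)) : ℚ))]
  refine Finset.sum_congr rfl (fun β _ => ?_)
  haveI := confSet_finite (E := E) homFin D (Quotient.out (β : IsoCl 𝒞)) C
  haveI := confSet_finite (E := E) homFin (Quotient.out (β : IsoCl 𝒞)) X A
  haveI := aut_finite homFin (Quotient.out (β : IsoCl 𝒞))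
  have ha : (0 : ℚ) < (Nat.card (Aut (Quotient.out (β : IsoCl 𝒞))) : ℚ) := by
    exact_mod_cast Nat.card_pos
  rw [eq_div_iff ha.ne']
  exact_mod_cast (card_fiber_v homFin A C D X (Quotient.out (β : IsoCl 𝒞)) β
    (skel_out_eq (β : IsoCl 𝒞))).symm

/-- The core associativity identity for the Hall structure constants. -/
lemma core_assoc (homFin : ∀ X Y : 𝒞, Finite (X ⟶ Y)) (A C D X : 𝒞)
    (T : Finset (IsoCl 𝒞))
    (hTU : ∀ β : IsoCl 𝒞, Nonempty (ConfSet E C (Quotient.out β) A) →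
      Nonempty (ConfSet E D X (Quotient.out β)) → β ∈ T)
    (hTV : ∀ β : IsoCl 𝒞, Nonempty (ConfSet E D (Quotient.out β) C) →
      Nonempty (ConfSet E (Quotient.out β) X A) → β ∈ T) :
    ∑ β ∈ T, cQ E A C (Quotient.out β) * cQ E (Quotient.out β) D X =
      ∑ β ∈ T, cQ E C D (Quotient.out β) * cQ E A (Quotient.out β) X := by
  have hU := card_uquot homFin A C D X T hTU
  have hV := card_vquot homFin A C D X T hTV
  have hUV : (Nat.card (UQuot E A C D X) : ℚ) = (Nat.card (VQuot E A C D X) : ℚ) := by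
    exact_mod_cast Nat.card_congr (uvEquiv E A C D X)
  have lhs_eq : ∑ β ∈ T, cQ E A C (Quotient.out β) * cQ E (Quotient.out β) D X =
      (Nat.card (UQuot E A C D X) : ℚ) / (Nat.card (Aut X) : ℚ) := by
    rw [hU, Finset.sum_div]
    refine Finset.sum_congr rfl (fun β _ => ?_)
    unfold cQ
    ring
  have rhs_eq : ∑ β ∈ T, cQ E C D (Quotient.out β) * cQ E A (Quotient.out β) X =
      (Nat.card (VQuot E A C D X) : ℚ) / (Nat.card (Aut X) : ℚ) := by
    rw [hV, Finset.sum_div]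
    refine Finset.sum_congr rfl (fun β _ => ?_)
    unfold cQ
    ring
  rw [lhs_eq, rhs_eq, hUV]

end UVCount

section HallConstruction
open scoped Classical
set_option linter.unusedSectionVars false
set_option maxHeartbeats 1600000

variable {𝒞 : Type u} [Category.{v} 𝒞] [Preadditive 𝒞] [HasZeroObject 𝒞] [HasBinaryBiproducts 𝒞]
variable (E : ExactStructure 𝒞)

def autCongr {B B' : 𝒞} (e : B ≅ B') : Aut B ≃ Aut B' where
  toFun φ := e.symm ≪≫ φ ≪≫ e
  invFun ψ := e ≪≫ ψ ≪≫ e.symm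
  left_inv φ := by apply Iso.ext; simp
  right_inv ψ := by apply Iso.ext; simp

lemma skel_eq_of_iso {X Y : 𝒞} (e : X ≅ Y) : skel X = skel Y :=
  Quotient.sound (⟨e⟩ : IsIsomorphic X Y)

lemma cQ_congr {A A' C C' B B' : 𝒞} (eA : A ≅ A') (eC : C ≅ C') (eB : B ≅ B') :
    cQ E A C B = cQ E A' C' B' := by
  unfold cQ
  rw [Nat.card_congr (confSetCongr (E := E) eC eB eA), Nat.card_congr (autCongr eB)]

lemma cQ_ne_zero (homFin : ∀ X Y : 𝒞, Finite (X ⟶ Y)) {A C B : 𝒞}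
    (h : Nonempty (ConfSet E C B A)) : cQ E A C B ≠ 0 := by
  haveI := confSet_finite (E := E) homFin C B A
  haveI := aut_finite homFin B
  haveI : Nonempty (ConfSet E C B A) := h
  unfold cQ
  have h1 : (0 : ℚ) < Nat.card (ConfSet E C B A) := by exact_mod_cast Nat.card_pos
  have h2 : (0 : ℚ) < Nat.card (Aut B) := by exact_mod_cast Nat.card_pos
  exact (div_pos h1 h2).ne'

lemma cQ_zero_of_empty {A C B : 𝒞} (h : ¬ Nonempty (ConfSet E C B A)) : cQ E A C B = 0 := by
  haveI : IsEmpty (ConfSet E C B A) := not_nonempty_iff.1 h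
  unfold cQ
  rw [Nat.card_of_isEmpty]
  simp

lemma gSupp_finite (extFin : ∀ X Y : 𝒞, Finite (Ext1 E X Y)) (A C : 𝒞) :
    {β : IsoCl 𝒞 | cQ E A C (Quotient.out β) ≠ 0}.Finite := by
  refine Set.Finite.subset (support_finite (E := E) extFin A C) ?_
  intro β hβ
  by_contra h
  exact hβ (cQ_zero_of_empty E h)

/-- The Hall product of two basis vectors, as a finitely supported function. -/
noncomputable def gfun (extFin : ∀ X Y : 𝒞, Finite (Ext1 E X Y)) (A C : 𝒞) :
    IsoCl 𝒞 →₀ ℚ :=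
  ⟨(gSupp_finite E extFin A C).toFinset, fun β => cQ E A C (Quotient.out β),
    fun β => by rw [Set.Finite.mem_toFinset]; exact Iff.rfl⟩

lemma gfun_apply (extFin : ∀ X Y : 𝒞, Finite (Ext1 E X Y)) (A C : 𝒞) (β : IsoCl 𝒞) :
    gfun E extFin A C β = cQ E A C (Quotient.out β) := rfl

lemma gfun_congr (extFin : ∀ X Y : 𝒞, Finite (Ext1 E X Y)) {A A' C C' : 𝒞}
    (eA : A ≅ A') (eC : C ≅ C') : gfun E extFin A C = gfun E extFin A' C' :=
  Finsupp.ext fun _ => cQ_congr E eA eC (Iso.refl _)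

/-- The Hall product descended to isomorphism classes. -/
noncomputable def gcl (extFin : ∀ X Y : 𝒞, Finite (Ext1 E X Y)) :
    IsoCl 𝒞 → IsoCl 𝒞 → (IsoCl 𝒞 →₀ ℚ) :=
  @Quotient.lift₂ 𝒞 𝒞 (IsoCl 𝒞 →₀ ℚ) (isIsomorphicSetoid 𝒞) (isIsomorphicSetoid 𝒞)
    (fun A C => gfun E extFin A C)
    (fun _ _ _ _ hA hC => gfun_congr E extFin hA.some hC.some)

lemma gcl_skel (extFin : ∀ X Y : 𝒞, Finite (Ext1 E X Y)) (A C : 𝒞) :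
    gcl E extFin (skel A) (skel C) = gfun E extFin A C := rfl

noncomputable def hmulInner (extFin : ∀ X Y : 𝒞, Finite (Ext1 E X Y)) (α : IsoCl 𝒞) :
    (IsoCl 𝒞 →₀ ℚ) →ₗ[ℚ] (IsoCl 𝒞 →₀ ℚ) :=
  Finsupp.lsum ℚ (fun γ => LinearMap.toSpanSingleton ℚ _ (gcl E extFin α γ))

/-- The bilinear Hall multiplication. -/
noncomputable def hmul (extFin : ∀ X Y : 𝒞, Finite (Ext1 E X Y)) :
    (IsoCl 𝒞 →₀ ℚ) →ₗ[ℚ] (IsoCl 𝒞 →₀ ℚ) →ₗ[ℚ] (IsoCl 𝒞 →₀ ℚ) :=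
  Finsupp.lsum ℚ (fun α => LinearMap.toSpanSingleton ℚ _ (hmulInner E extFin α))

variable (extFin : ∀ X Y : 𝒞, Finite (Ext1 E X Y))

lemma hmulInner_single (α γ : IsoCl 𝒞) (r : ℚ) :
    hmulInner E extFin α (Finsupp.single γ r) = r • gcl E extFin α γ := by
  unfold hmulInner
  rw [Finsupp.lsum_single, LinearMap.toSpanSingleton_apply]

lemma hmul_single (α : IsoCl 𝒞) (r : ℚ) :
    hmul E extFin (Finsupp.single α r) = r • hmulInner E extFin α := by
  unfold hmul
  rw [Finsupp.lsum_single, LinearMap.toSpanSingleton_apply]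

lemma hmul_single_single (A C : 𝒞) :
    hmul E extFin (hallBasis A) (hallBasis C) = gfun E extFin A C := by
  unfold hallBasis
  rw [hmul_single, one_smul, hmulInner_single, one_smul, gcl_skel]

lemma hmul_apply_left (f : IsoCl 𝒞 →₀ ℚ) (D : 𝒞) (ξ : IsoCl 𝒞) :
    hmul E extFin f (hallBasis D) ξ =
      ∑ β ∈ f.support, f β * (gcl E extFin β (skel D)) ξ := by
  have h1 : hmul E extFin f = ∑ β ∈ f.support, f β • hmulInner E extFin β := by
    unfold hmul
    rw [Finsupp.lsum_apply]
    rw [Finsupp.sum]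
    refine Finset.sum_congr rfl fun β _ => ?_
    rw [LinearMap.toSpanSingleton_apply]
  rw [h1, LinearMap.coe_sum, Finset.sum_apply, Finsupp.finset_sum_apply]
  refine Finset.sum_congr rfl fun β _ => ?_
  rw [LinearMap.smul_apply]
  have h2 : hmulInner E extFin β (hallBasis D) = gcl E extFin β (skel D) := by
    unfold hallBasis
    rw [hmulInner_single, one_smul]
  rw [h2, Finsupp.smul_apply, smul_eq_mul]

lemma hmul_apply_right (A : 𝒞) (g : IsoCl 𝒞 →₀ ℚ) (ξ : IsoCl 𝒞) :
    hmul E extFin (hallBasis A) g ξ =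
      ∑ γ ∈ g.support, g γ * (gcl E extFin (skel A) γ) ξ := by
  have h1 : hmul E extFin (hallBasis A) g = hmulInner E extFin (skel A) g := by
    unfold hallBasis
    rw [hmul_single, one_smul]
  rw [h1]
  unfold hmulInner
  rw [Finsupp.lsum_apply, Finsupp.sum_apply]
  rw [Finsupp.sum]
  refine Finset.sum_congr rfl fun γ _ => ?_
  rw [LinearMap.toSpanSingleton_apply, Finsupp.smul_apply, smul_eq_mul]

/-- Associativity on basis vectors: the main counting argument. -/
lemma hmul_assoc_basis (homFin : ∀ X Y : 𝒞, Finite (X ⟶ Y)) (A C D : 𝒞) :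
    hmul E extFin (hmul E extFin (hallBasis A) (hallBasis C)) (hallBasis D) =
      hmul E extFin (hallBasis A) (hmul E extFin (hallBasis C) (hallBasis D)) := by
  classical
  rw [hmul_single_single, hmul_single_single]
  apply Finsupp.ext
  intro ξ
  rw [hmul_apply_left, hmul_apply_right]
  set T := (gfun E extFin A C).support ∪ (gfun E extFin C D).support with hT
  have hterm_l : ∀ β : IsoCl 𝒞, gfun E extFin A C β * (gcl E extFin β (skel D)) ξ =
      cQ E A C (Quotient.out β) * cQ E (Quotient.out β) D (Quotient.out ξ) := by
    intro β
    congr 1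
    conv_lhs => rw [← skel_out_eq β]
    rfl
  have hterm_r : ∀ β : IsoCl 𝒞, gfun E extFin C D β * (gcl E extFin (skel A) β) ξ =
      cQ E C D (Quotient.out β) * cQ E A (Quotient.out β) (Quotient.out ξ) := by
    intro β
    congr 1
    conv_lhs => rw [← skel_out_eq β]
    rfl
  have hL : ∑ β ∈ (gfun E extFin A C).support, gfun E extFin A C β * (gcl E extFin β (skel D)) ξ
      = ∑ β ∈ T, cQ E A C (Quotient.out β) * cQ E (Quotient.out β) D (Quotient.out ξ) := by
    rw [Finset.sum_subset Finset.subset_union_left (fun β _ hβ => by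
      rw [Finsupp.notMem_support_iff.1 hβ, zero_mul])]
    exact Finset.sum_congr rfl fun β _ => hterm_l β
  have hR : ∑ β ∈ (gfun E extFin C D).support, gfun E extFin C D β * (gcl E extFin (skel A) β) ξ
      = ∑ β ∈ T, cQ E C D (Quotient.out β) * cQ E A (Quotient.out β) (Quotient.out ξ) := by
    rw [Finset.sum_subset Finset.subset_union_right (fun β _ hβ => by
      rw [Finsupp.notMem_support_iff.1 hβ, zero_mul])]
    exact Finset.sum_congr rfl fun β _ => hterm_r β
  rw [hL, hR]
  refine core_assoc homFin A C D (Quotient.out ξ) T ?_ ?_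
  · intro β h1 _
    refine Finset.mem_union_left _ ?_
    rw [Finsupp.mem_support_iff, gfun_apply]
    exact cQ_ne_zero E homFin h1
  · intro β h1 _
    refine Finset.mem_union_right _ ?_
    rw [Finsupp.mem_support_iff, gfun_apply]
    exact cQ_ne_zero E homFin h1

lemma hmul_assoc (homFin : ∀ X Y : 𝒞, Finite (X ⟶ Y)) (x y z : IsoCl 𝒞 →₀ ℚ) :
    hmul E extFin (hmul E extFin x y) z = hmul E extFin x (hmul E extFin y z) := by
  have key : ∀ a c d : IsoCl 𝒞,
      hmul E extFin (hmul E extFin (Finsupp.single a 1) (Finsupp.single c 1))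
          (Finsupp.single d 1) =
        hmul E extFin (Finsupp.single a 1)
          (hmul E extFin (Finsupp.single c 1) (Finsupp.single d 1)) := by
    intro a c d
    have ha : Finsupp.single a (1 : ℚ) = hallBasis (Quotient.out a) := by
      unfold hallBasis; rw [skel_out_eq]
    have hc : Finsupp.single c (1 : ℚ) = hallBasis (Quotient.out c) := by
      unfold hallBasis; rw [skel_out_eq]
    have hd : Finsupp.single d (1 : ℚ) = hallBasis (Quotient.out d) := by
      unfold hallBasis; rw [skel_out_eq]
    rw [ha, hc, hd]
    exact hmul_assoc_basis E extFin homFin _ _ _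
  induction x using Finsupp.induction_linear with
  | zero => simp
  | add f g hf hg => simp [map_add, LinearMap.add_apply, hf, hg]
  | single a r =>
    induction y using Finsupp.induction_linear with
    | zero => simp
    | add f g hf hg => simp [map_add, LinearMap.add_apply, hf, hg]
    | single c s =>
      induction z using Finsupp.induction_linear with
      | zero => simp
      | add f g hf hg => simp [map_add, hf, hg]
      | single d t =>
        have hra : Finsupp.single a r = r • Finsupp.single a (1 : ℚ) := by
          rw [Finsupp.smul_single, smul_eq_mul, mul_one]
        have hrc : Finsupp.single c s = s • Finsupp.single c (1 : ℚ) := by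
          rw [Finsupp.smul_single, smul_eq_mul, mul_one]
        have hrd : Finsupp.single d t = t • Finsupp.single d (1 : ℚ) := by
          rw [Finsupp.smul_single, smul_eq_mul, mul_one]
        rw [hra, hrc, hrd]
        simp only [map_smul, LinearMap.smul_apply]
        rw [key a c d]

noncomputable def biprodZeroRightIso (C : 𝒞) : (C ⊞ (0 : 𝒞)) ≅ C where
  hom := biprod.fst
  inv := biprod.lift (𝟙 C) 0
  hom_inv_id := by
    apply biprod.hom_ext
    · simp
    · exact HasZeroObject.to_zero_ext _ _
  inv_hom_id := by simp

noncomputable def biprodZeroLeftIso (B : 𝒞) : ((0 : 𝒞) ⊞ B) ≅ B where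
  hom := biprod.snd
  inv := biprod.lift 0 (𝟙 B)
  hom_inv_id := by
    apply biprod.hom_ext
    · exact HasZeroObject.to_zero_ext _ _
    · simp
  inv_hom_id := by simp

noncomputable def confSetZeroRight (C B : 𝒞) : ConfSet E C B (0 : 𝒞) ≃ (C ≅ B) where
  toFun z :=
    { hom := z.1.1
      inv := (conf_lift z.2 (𝟙 B) (HasZeroObject.to_zero_ext _ _)).choose
      hom_inv_id := by
        haveI : Mono z.1.1 := conf_mono z.2
        rw [← cancel_mono z.1.1, Category.assoc,
          (conf_lift z.2 (𝟙 B) (HasZeroObject.to_zero_ext _ _)).choose_spec, Category.comp_id,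
          Category.id_comp]
      inv_hom_id := (conf_lift z.2 (𝟙 B) (HasZeroObject.to_zero_ext _ _)).choose_spec }
  invFun e := ⟨(e.hom, 0), by
    refine E.conf_iso (Iso.refl C) (biprodZeroRightIso C ≪≫ e) (Iso.refl (0 : 𝒞))
      (E.split_conf C (0 : 𝒞)) ?_ (HasZeroObject.to_zero_ext _ _)
    show biprod.inl ≫ (biprodZeroRightIso C ≪≫ e).hom = (Iso.refl C).hom ≫ e.hom
    simp [biprodZeroRightIso]⟩
  left_inv z := Subtype.ext (Prod.ext rfl (HasZeroObject.to_zero_ext _ _))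
  right_inv e := Iso.ext rfl

noncomputable def confSetZeroLeft (B A : 𝒞) : ConfSet E (0 : 𝒞) B A ≃ (B ≅ A) where
  toFun z :=
    { hom := z.1.2
      inv := (conf_desc z.2 (𝟙 B) (HasZeroObject.from_zero_ext _ _)).choose
      hom_inv_id := (conf_desc z.2 (𝟙 B) (HasZeroObject.from_zero_ext _ _)).choose_spec
      inv_hom_id := by
        haveI : Epi z.1.2 := conf_epi z.2
        rw [← cancel_epi z.1.2, ← Category.assoc,
          (conf_desc z.2 (𝟙 B) (HasZeroObject.from_zero_ext _ _)).choose_spec, Category.comp_id,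
          Category.id_comp] }
  invFun e := ⟨(0, e.hom), by
    refine E.conf_iso (Iso.refl (0 : 𝒞)) (biprodZeroLeftIso B) e (E.split_conf (0 : 𝒞) B)
      (HasZeroObject.from_zero_ext _ _) ?_
    show biprod.snd ≫ e.hom = (biprodZeroLeftIso B).hom ≫ e.hom
    simp [biprodZeroLeftIso]⟩
  left_inv z := Subtype.ext (Prod.ext (HasZeroObject.from_zero_ext _ _) rfl)
  right_inv e := Iso.ext rfl

lemma card_iso_div_aut (homFin : ∀ X Y : 𝒞, Finite (X ⟶ Y)) (C B : 𝒞) :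
    (Nat.card (C ≅ B) : ℚ) / (Nat.card (Aut B) : ℚ) =
      if Nonempty (C ≅ B) then 1 else 0 := by
  haveI := aut_finite homFin B
  by_cases h : Nonempty (C ≅ B)
  · obtain ⟨e₀⟩ := h
    rw [if_pos ⟨e₀⟩]
    have hc : Nat.card (C ≅ B) = Nat.card (Aut B) :=
      Nat.card_congr ⟨fun f => e₀.symm ≪≫ f, fun g => e₀ ≪≫ g,
        fun f => by apply Iso.ext; simp, fun g => by apply Iso.ext; simp⟩
    rw [hc, div_self]
    exact_mod_cast (Nat.card_pos (α := Aut B)).ne'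
  · rw [if_neg h]
    haveI : IsEmpty (C ≅ B) := not_nonempty_iff.1 h
    rw [Nat.card_of_isEmpty]
    simp

lemma card_iso_div_aut' (homFin : ∀ X Y : 𝒞, Finite (X ⟶ Y)) (B A : 𝒞) :
    (Nat.card (B ≅ A) : ℚ) / (Nat.card (Aut B) : ℚ) =
      if Nonempty (B ≅ A) then 1 else 0 := by
  haveI := aut_finite homFin B
  by_cases h : Nonempty (B ≅ A)
  · obtain ⟨e₀⟩ := h
    rw [if_pos ⟨e₀⟩]
    have hc : Nat.card (B ≅ A) = Nat.card (Aut B) :=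
      Nat.card_congr ⟨fun f => f ≪≫ e₀.symm, fun g => g ≪≫ e₀,
        fun f => by apply Iso.ext; simp, fun g => by apply Iso.ext; simp⟩
    rw [hc, div_self]
    exact_mod_cast (Nat.card_pos (α := Aut B)).ne'
  · rw [if_neg h]
    haveI : IsEmpty (B ≅ A) := not_nonempty_iff.1 h
    rw [Nat.card_of_isEmpty]
    simp

lemma gfun_zero_left (homFin : ∀ X Y : 𝒞, Finite (X ⟶ Y)) (C : 𝒞) :
    gfun E extFin (0 : 𝒞) C = hallBasis C := by
  apply Finsupp.ext
  intro β
  rw [gfun_apply]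
  unfold cQ hallBasis
  rw [Nat.card_congr (confSetZeroRight E C (Quotient.out β)),
    card_iso_div_aut homFin, Finsupp.single_apply]
  by_cases h : skel C = β
  · have hne : Nonempty (C ≅ Quotient.out β) := Quotient.exact (h.trans (skel_out_eq β).symm)
    rw [if_pos hne, if_pos h]
  · rw [if_neg (fun hne : Nonempty (C ≅ Quotient.out β) =>
      h ((skel_eq_of_iso hne.some).trans (skel_out_eq β))), if_neg h]

lemma gfun_zero_right (homFin : ∀ X Y : 𝒞, Finite (X ⟶ Y)) (A : 𝒞) :
    gfun E extFin A (0 : 𝒞) = hallBasis A := by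
  apply Finsupp.ext
  intro β
  rw [gfun_apply]
  unfold cQ hallBasis
  rw [Nat.card_congr (confSetZeroLeft E (Quotient.out β) A),
    card_iso_div_aut' homFin, Finsupp.single_apply]
  by_cases h : skel A = β
  · have hne : Nonempty ((Quotient.out β) ≅ A) := Quotient.exact ((skel_out_eq β).trans h.symm)
    rw [if_pos hne, if_pos h]
  · rw [if_neg (fun hne : Nonempty ((Quotient.out β) ≅ A) =>
      h ((skel_eq_of_iso hne.some.symm).trans (skel_out_eq β))), if_neg h]

lemma hmul_unit_left (homFin : ∀ X Y : 𝒞, Finite (X ⟶ Y)) (x : IsoCl 𝒞 →₀ ℚ) :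
    hmul E extFin (hallBasis (0 : 𝒞)) x = x := by
  induction x using Finsupp.induction_linear with
  | zero => simp
  | add f g hf hg => simp [map_add, hf, hg]
  | single γ r =>
    have hr : Finsupp.single γ r = r • Finsupp.single γ (1 : ℚ) := by
      rw [Finsupp.smul_single, smul_eq_mul, mul_one]
    have hγ : Finsupp.single γ (1 : ℚ) = hallBasis (Quotient.out γ) := by
      unfold hallBasis; rw [skel_out_eq]
    rw [hr, map_smul, hγ, hmul_single_single, gfun_zero_left E extFin homFin, ← hγ, ← hr]

lemma hmul_unit_right (homFin : ∀ X Y : 𝒞, Finite (X ⟶ Y)) (x : IsoCl 𝒞 →₀ ℚ) :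
    hmul E extFin x (hallBasis (0 : 𝒞)) = x := by
  induction x using Finsupp.induction_linear with
  | zero => simp
  | add f g hf hg => simp [map_add, LinearMap.add_apply, hf, hg]
  | single γ r =>
    have hr : Finsupp.single γ r = r • Finsupp.single γ (1 : ℚ) := by
      rw [Finsupp.smul_single, smul_eq_mul, mul_one]
    have hγ : Finsupp.single γ (1 : ℚ) = hallBasis (Quotient.out γ) := by
      unfold hallBasis; rw [skel_out_eq]
    rw [hr, map_smul, LinearMap.smul_apply, hγ, hmul_single_single,
      gfun_zero_right E extFin homFin, ← hγ, ← hr]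

end HallConstruction
/-- Ringel, Hubery.  Let `E` be an essentially small exact category, linear
over a finite field `k`, with finite `Hom`- and `Ext¹`-spaces.  Then the Hall algebra `H(E)`
— the `ℚ`-vector space with basis the isomorphism classes of objects of `E`, equipped with the
(unique) bilinear multiplication with structure constants
`[A] ⋄ [C] = ∑_B (|Ext¹(A,C)_B| / |Hom(A,C)|) [B]` — is associative and unital, with unit the
class `[0]` of the zero object. -/
theorem hall_algebra_associative_unital
    {k : Type} [Field k] [Finite k]
    {𝒞 : Type u} [Category.{v} 𝒞] [Preadditive 𝒞] [CategoryTheory.Linear k 𝒞]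
    [HasZeroObject 𝒞] [HasBinaryBiproducts 𝒞] [EssentiallySmall.{v} 𝒞]
    (E : ExactStructure 𝒞)
    (homFin : ∀ A B : 𝒞, Finite (A ⟶ B))
    (extFin : ∀ A B : 𝒞, Finite (Ext1 E A B)) :
    ∃ hm : HallMul E,
      (∀ x y z, hm.mul (hm.mul x y) z = hm.mul x (hm.mul y z)) ∧
      (∀ x, hm.mul (hallBasis (0 : 𝒞)) x = x) ∧
      (∀ x, hm.mul x (hallBasis (0 : 𝒞)) = x) := by
  classical
  refine ⟨⟨hmul E extFin, fun A C B => ?_⟩, fun x y z => hmul_assoc E extFin homFin x y z,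
    fun x => hmul_unit_left E extFin homFin x, fun x => hmul_unit_right E extFin homFin x⟩
  rw [hmul_single_single]
  have hiso : Nonempty ((Quotient.out (skel B)) ≅ B) := Quotient.exact (skel_out_eq (skel B))
  have h1 : gfun E extFin A C (skel B) = cQ E A C B := by
    rw [gfun_apply]
    exact cQ_congr E (Iso.refl A) (Iso.refl C) hiso.some
  rw [h1]
  exact (hallCoeff_eq_cQ homFin A C B).symm

end HallPaper
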